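/- arXiv:1807.01584 — 6 statements merged into one kernel-verified Lean document; each statement's English description precedes it below -/
import Mathlib

section
/- Let P be an x-monotone polyomino and let c ∈ ℤ be such that both P≤c = {p ∈ P : p₁ ≤ c} and P>c = {p ∈ P : p₁ > c} are nonempty. Then P≤c and P>c are x-monotone polyominoes (in particular, each induces a connected grid graph), and the partition (P≤c, P>c) is a valid vertical straight 2-cut of P at position c. -/
/-- Two grid points are adjacent if they are at Euclidean distance 1. -/
def Adj (p q : ℤ × ℤ) : Prop := |p.1 - q.1| + |p.2 - q.2| = 1

/-- A set of grid points induces a connected grid graph. -/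
def GridConnected (S : Set (ℤ × ℤ)) : Prop :=
  ∀ p ∈ S, ∀ q ∈ S,
    Relation.ReflTransGen (fun a b => a ∈ S ∧ b ∈ S ∧ Adj a b) p q

/-- A polyomino: a finite nonempty set of grid points with connected grid graph. -/
def IsPolyomino (P : Finset (ℤ × ℤ)) : Prop :=
  P.Nonempty ∧ GridConnected ↑P

/-- x-monotone (column convex). -/
def ColumnConvex (S : Set (ℤ × ℤ)) : Prop :=
  ∀ x y₁ y₂ y : ℤ, (x, y₁) ∈ S → (x, y₂) ∈ S → y₁ ≤ y → y ≤ y₂ → (x, y) ∈ S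

/-- y-monotone (row convex). -/
def RowConvex (S : Set (ℤ × ℤ)) : Prop :=
  ∀ y x₁ x₂ x : ℤ, (x₁, y) ∈ S → (x₂, y) ∈ S → x₁ ≤ x → x ≤ x₂ → (x, y) ∈ S

/-- Orthogonally convex. -/
def OrthoConvex (S : Set (ℤ × ℤ)) : Prop := ColumnConvex S ∧ RowConvex S

/-- Simple (hole-free): the complement induces a connected grid graph. -/
def SimplePoly (P : Finset (ℤ × ℤ)) : Prop :=
  GridConnected ((↑P : Set (ℤ × ℤ))ᶜ)

/-- Left piece of the vertical cut at `c`. -/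
def PLe (P : Finset (ℤ × ℤ)) (c : ℤ) : Finset (ℤ × ℤ) :=
  P.filter (fun p => p.1 ≤ c)

/-- Right piece of the vertical cut at `c`. -/
def PGt (P : Finset (ℤ × ℤ)) (c : ℤ) : Finset (ℤ × ℤ) :=
  P.filter (fun p => c < p.1)

/-- Vertical straight 2-cut of `P` at position `c` into left piece `P₁` and right
piece `P₂`. -/
def IsVCut (P P₁ P₂ : Finset (ℤ × ℤ)) (c : ℤ) : Prop :=
  P₁ ∪ P₂ = P ∧ Disjoint P₁ P₂ ∧ P₁.Nonempty ∧ P₂.Nonempty ∧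
  GridConnected ↑P₁ ∧ GridConnected ↑P₂ ∧
  ∀ p ∈ P₁, ∀ q ∈ P₂, Adj p q → p.1 = c ∧ q.1 = c + 1 ∧ p.2 = q.2

/-- Valid vertical straight 2-cut: the pieces can be pulled apart horizontally. -/
def ValidVCut (P P₁ P₂ : Finset (ℤ × ℤ)) (c : ℤ) : Prop :=
  IsVCut P P₁ P₂ c ∧ ∀ k : ℤ, 1 ≤ k → ∀ p ∈ P₂, (p.1 + k, p.2) ∉ P₁

/-- Horizontal straight 2-cut of `P` at position `c` into bottom piece `P₁` and
top piece `P₂` (coordinates exchanged). -/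
def IsHCut (P P₁ P₂ : Finset (ℤ × ℤ)) (c : ℤ) : Prop :=
  P₁ ∪ P₂ = P ∧ Disjoint P₁ P₂ ∧ P₁.Nonempty ∧ P₂.Nonempty ∧
  GridConnected ↑P₁ ∧ GridConnected ↑P₂ ∧
  ∀ p ∈ P₁, ∀ q ∈ P₂, Adj p q → p.2 = c ∧ q.2 = c + 1 ∧ p.1 = q.1

/-- Valid horizontal straight 2-cut: the pieces can be pulled apart vertically. -/
def ValidHCut (P P₁ P₂ : Finset (ℤ × ℤ)) (c : ℤ) : Prop :=
  IsHCut P P₁ P₂ c ∧ ∀ k : ℤ, 1 ≤ k → ∀ p ∈ P₂, (p.1, p.2 + k) ∉ P₁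

/-- The part of the decomposition of `P` by the vertical cut positions `C`
that contains the point `p`. -/
def CutPart (P : Finset (ℤ × ℤ)) (C : Finset ℤ) (p : ℤ × ℤ) : Finset (ℤ × ℤ) :=
  P.filter (fun q => ∀ c ∈ C, (q.1 ≤ c ↔ p.1 ≤ c))

/-- The vertical cut positions `C` decompose `P` into orthogonally convex parts. -/
def Decomposes (P : Finset (ℤ × ℤ)) (C : Finset ℤ) : Prop :=
  ∀ p ∈ P, OrthoConvex ↑(CutPart P C p)

/-- The decomposition number `d(P)`: the minimum number of vertical cut positions
decomposing `P` into orthogonally convex parts. -/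
noncomputable def decompNumber (P : Finset (ℤ × ℤ)) : ℕ :=
  sInf {k | ∃ C : Finset ℤ, C.card = k ∧ Decomposes P C}

/-- `(a, b, y₀)` is a minimum of the upper envelope of `P`. -/
def UpperEnvMin (P : Set (ℤ × ℤ)) (a b y₀ : ℤ) : Prop :=
  a + 2 ≤ b ∧ (∀ x : ℤ, a ≤ x → x ≤ b → (x, y₀) ∈ P) ∧
  (a, y₀ + 1) ∈ P ∧ (b, y₀ + 1) ∈ P ∧ ∀ x : ℤ, a < x → x < b → (x, y₀ + 1) ∉ P

/-- `(a, b, y₀)` is a maximum of the lower envelope of `P`. -/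
def LowerEnvMax (P : Set (ℤ × ℤ)) (a b y₀ : ℤ) : Prop :=
  a + 2 ≤ b ∧ (∀ x : ℤ, a ≤ x → x ≤ b → (x, y₀) ∈ P) ∧
  (a, y₀ - 1) ∈ P ∧ (b, y₀ - 1) ∈ P ∧ ∀ x : ℤ, a < x → x < b → (x, y₀ - 1) ∉ P

/-- The four cells of the 2×2 square with lower-left corner `s`. -/
def SquareCells (s : ℤ × ℤ) : Finset (ℤ × ℤ) :=
  {s, (s.1 + 1, s.2), (s.1, s.2 + 1), (s.1 + 1, s.2 + 1)}

/-- A 2×2 square (given by its lower-left corner `s`) is a reflex witness of `P`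
if it contains exactly three points of `P`. -/
def ReflexWitness (P : Finset (ℤ × ℤ)) (s : ℤ × ℤ) : Prop :=
  (SquareCells s ∩ P).card = 3

/-- The number of reflex witnesses of `P`. -/
noncomputable def wRef (P : Finset (ℤ × ℤ)) : ℕ :=
  Set.ncard {s : ℤ × ℤ | ReflexWitness P s}

/-- A tile `t` is locally reflex: it is the corner tile of some reflex witness,
i.e. the square cell opposite to `t` is the one missing from `P`. -/
def LocallyReflex (P : Finset (ℤ × ℤ)) (t : ℤ × ℤ) : Prop :=
  ∃ s : ℤ × ℤ, ReflexWitness P s ∧ t ∈ SquareCells s ∧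
    (2 * s.1 + 1 - t.1, 2 * s.2 + 1 - t.2) ∉ P

/-- The number of locally reflex tiles of `P`. -/
noncomputable def rRef (P : Finset (ℤ × ℤ)) : ℕ :=
  Set.ncard {t : ℤ × ℤ | LocallyReflex P t}

/-- A tile `t` is locally convex: some 2×2 square contains `t` and no other
point of `P`. -/
def LocallyConvex (P : Finset (ℤ × ℤ)) (t : ℤ × ℤ) : Prop :=
  ∃ s : ℤ × ℤ, t ∈ SquareCells s ∧ SquareCells s ∩ P = {t}

/-- A straight 2-cut `(P₁, P₂)` is along a locally reflex tile of `P`. -/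
def AlongReflex (P P₁ P₂ : Finset (ℤ × ℤ)) : Prop :=
  ∃ s : ℤ × ℤ, ReflexWitness P s ∧ (SquareCells s ∩ P₁).Nonempty ∧
    (SquareCells s ∩ P₂).Nonempty

/-- A valid (not necessarily straight) 2-cut of `P` into `P₁` and `P₂`. -/
def ValidCut (P P₁ P₂ : Finset (ℤ × ℤ)) : Prop :=
  P₁ ∪ P₂ = P ∧ Disjoint P₁ P₂ ∧ P₁.Nonempty ∧ P₂.Nonempty ∧
  GridConnected ↑P₁ ∧ GridConnected ↑P₂ ∧
  ∃ v ∈ ({(1, 0), (-1, 0), (0, 1), (0, -1)} : Set (ℤ × ℤ)),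
    ∀ k : ℤ, 1 ≤ k → ∀ p ∈ P₂, (p.1 + k * v.1, p.2 + k * v.2) ∉ P₁

/-- A polyomino is 2-cuttable: it is orthogonally convex, or some valid 2-cut
splits it into two 2-cuttable polyominoes. -/
inductive TwoCuttable : Finset (ℤ × ℤ) → Prop
  | convex (P : Finset (ℤ × ℤ)) : IsPolyomino P → OrthoConvex ↑P → TwoCuttable P
  | cut (P P₁ P₂ : Finset (ℤ × ℤ)) : ValidCut P P₁ P₂ →
      TwoCuttable P₁ → TwoCuttable P₂ → TwoCuttable P

/-- A polyomino is straight 2-cuttable: it is orthogonally convex, or some valid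
vertical or horizontal straight 2-cut splits it into two straight 2-cuttable
polyominoes. -/
inductive Straight2Cuttable : Finset (ℤ × ℤ) → Prop
  | convex (P : Finset (ℤ × ℤ)) : IsPolyomino P → OrthoConvex ↑P → Straight2Cuttable P
  | vcut (P P₁ P₂ : Finset (ℤ × ℤ)) (c : ℤ) : ValidVCut P P₁ P₂ c →
      Straight2Cuttable P₁ → Straight2Cuttable P₂ → Straight2Cuttable P
  | hcut (P P₁ P₂ : Finset (ℤ × ℤ)) (c : ℤ) : ValidHCut P P₁ P₂ c →
      Straight2Cuttable P₁ → Straight2Cuttable P₂ → Straight2Cuttable P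

lemma adj_symm {p q : ℤ × ℤ} (h : Adj p q) : Adj q p := by
  unfold Adj at *; simp only [Int.abs_eq_natAbs] at *; omega

/-- Vertical segment connectivity inside any column-convex set. -/
lemma vertSegAux (S : Set (ℤ × ℤ)) (hS : ColumnConvex S) (x y₁ : ℤ) :
    ∀ n : ℕ, ∀ y₂ : ℤ, y₂ = y₁ + n → (x, y₁) ∈ S → (x, y₂) ∈ S →
      Relation.ReflTransGen (fun a b => a ∈ S ∧ b ∈ S ∧ Adj a b) (x, y₁) (x, y₂) := by
  intro n
  induction n with
  | zero => intro y₂ h _ _; simp only [Nat.cast_zero, add_zero] at h; subst h; exact .refl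
  | succ m ih =>
    intro y₂ h h1 h2
    have hmid : (x, y₁ + (m : ℤ)) ∈ S := hS x y₁ y₂ _ h1 h2 (by omega) (by omega)
    refine .tail (ih (y₁ + m) rfl h1 hmid) ?_
    refine ⟨hmid, h2, ?_⟩
    unfold Adj; simp only [Int.abs_eq_natAbs]; omega

lemma vertSeg (S : Set (ℤ × ℤ)) (hS : ColumnConvex S) (x y₁ y₂ : ℤ)
    (h1 : (x, y₁) ∈ S) (h2 : (x, y₂) ∈ S) :
    Relation.ReflTransGen (fun a b => a ∈ S ∧ b ∈ S ∧ Adj a b) (x, y₁) (x, y₂) := by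
  rcases le_or_gt y₁ y₂ with h | h
  · exact vertSegAux S hS x y₁ (y₂ - y₁).toNat y₂ (by omega) h1 h2
  · have := vertSegAux S hS x y₂ (y₁ - y₂).toNat y₁ (by omega) h2 h1
    exact (@Relation.ReflTransGen.symmetric _ _ ⟨fun a b ⟨ha, hb, hab⟩ => ⟨hb, ha, adj_symm hab⟩⟩).symm _ _ this

lemma mem_PLe {P : Finset (ℤ × ℤ)} {c : ℤ} {p : ℤ × ℤ} :
    p ∈ PLe P c ↔ p ∈ P ∧ p.1 ≤ c := Finset.mem_filter

lemma mem_PGt {P : Finset (ℤ × ℤ)} {c : ℤ} {p : ℤ × ℤ} :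
    p ∈ PGt P c ↔ p ∈ P ∧ c < p.1 := Finset.mem_filter

lemma columnConvex_PLe {P : Finset (ℤ × ℤ)} {c : ℤ} (hmono : ColumnConvex ↑P) :
    ColumnConvex ↑(PLe P c) := by
  intro x y₁ y₂ y h1 h2 hy1 hy2
  simp only [Finset.mem_coe, mem_PLe] at *
  exact ⟨hmono x y₁ y₂ y h1.1 h2.1 hy1 hy2, h1.2⟩

lemma columnConvex_PGt {P : Finset (ℤ × ℤ)} {c : ℤ} (hmono : ColumnConvex ↑P) :
    ColumnConvex ↑(PGt P c) := by
  intro x y₁ y₂ y h1 h2 hy1 hy2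
  simp only [Finset.mem_coe, mem_PGt] at *
  exact ⟨hmono x y₁ y₂ y h1.1 h2.1 hy1 hy2, h1.2⟩

lemma gridConnected_PLe {P : Finset (ℤ × ℤ)} {c : ℤ}
    (hconn : GridConnected ↑P) (hmono : ColumnConvex ↑P) :
    GridConnected ↑(PLe P c) := by
  intro p hp q hq
  simp only [Finset.mem_coe, mem_PLe] at hp hq
  have hpath := hconn p (by exact_mod_cast hp.1) q (by exact_mod_cast hq.1)
  set R' : ℤ × ℤ → ℤ × ℤ → Prop :=
    fun a b => a ∈ (↑(PLe P c) : Set (ℤ × ℤ)) ∧ b ∈ (↑(PLe P c) : Set (ℤ × ℤ)) ∧ Adj a b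
    with hR'
  have key : ∀ a : ℤ × ℤ,
      Relation.ReflTransGen (fun a b => a ∈ (↑P : Set (ℤ × ℤ)) ∧ b ∈ (↑P : Set (ℤ × ℤ)) ∧ Adj a b) a q →
      (a ∈ P → a.1 ≤ c → Relation.ReflTransGen R' a q) ∧
      (a ∈ P → c < a.1 → ∃ y : ℤ, ((c, y) : ℤ × ℤ) ∈ P ∧ Relation.ReflTransGen R' (c, y) q) := by
    intro a ha
    induction ha using Relation.ReflTransGen.head_induction_on with
    | refl =>
      constructor
      · intro _ _; exact .refl
      · intro _ h; omega
    | head hstep _ ih =>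
      rename_i x b _
      obtain ⟨hxP, hbP, hadj⟩ := hstep
      simp only [Finset.mem_coe] at hxP hbP
      rcases le_or_gt b.1 c with hb | hb
      · constructor
        · intro hx hxc
          refine .head ⟨?_, ?_, hadj⟩ (ih.1 hbP hb)
          · simp only [Finset.mem_coe, mem_PLe]; exact ⟨hx, hxc⟩
          · simp only [Finset.mem_coe, mem_PLe]; exact ⟨hbP, hb⟩
        · intro hx hxc
          have hb1 : b.1 = c := by unfold Adj at hadj; simp only [Int.abs_eq_natAbs] at hadj; omega
          refine ⟨b.2, ?_, ?_⟩
          · have : ((c, b.2) : ℤ × ℤ) = b := by rw [← hb1]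
            rw [this]; exact hbP
          · have : ((c, b.2) : ℤ × ℤ) = b := by rw [← hb1]
            rw [this]; exact ih.1 hbP hb
      · obtain ⟨y, hyP, hypath⟩ := ih.2 hbP hb
        constructor
        · intro hx hxc
          have hx1 : x.1 = c ∧ x.2 = b.2 := by unfold Adj at hadj; simp only [Int.abs_eq_natAbs] at hadj; omega
          have hxx : x = ((c, x.2) : ℤ × ℤ) := by rw [← hx1.1]
          rw [hxx]
          refine Relation.ReflTransGen.trans ?_ hypath
          refine vertSeg _ (columnConvex_PLe hmono) c x.2 y ?_ ?_
          · simp only [Finset.mem_coe, mem_PLe]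
            exact ⟨by rw [← hxx]; exact hx, le_refl c⟩
          · simp only [Finset.mem_coe, mem_PLe]; exact ⟨hyP, le_refl c⟩
        · intro _ _; exact ⟨y, hyP, hypath⟩
  exact (key p hpath).1 hp.1 hp.2

lemma gridConnected_PGt {P : Finset (ℤ × ℤ)} {c : ℤ}
    (hconn : GridConnected ↑P) (hmono : ColumnConvex ↑P) :
    GridConnected ↑(PGt P c) := by
  intro p hp q hq
  simp only [Finset.mem_coe, mem_PGt] at hp hq
  have hpath := hconn p (by exact_mod_cast hp.1) q (by exact_mod_cast hq.1)
  set R' : ℤ × ℤ → ℤ × ℤ → Prop :=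
    fun a b => a ∈ (↑(PGt P c) : Set (ℤ × ℤ)) ∧ b ∈ (↑(PGt P c) : Set (ℤ × ℤ)) ∧ Adj a b
    with hR'
  have key : ∀ a : ℤ × ℤ,
      Relation.ReflTransGen (fun a b => a ∈ (↑P : Set (ℤ × ℤ)) ∧ b ∈ (↑P : Set (ℤ × ℤ)) ∧ Adj a b) a q →
      (a ∈ P → c < a.1 → Relation.ReflTransGen R' a q) ∧
      (a ∈ P → a.1 ≤ c → ∃ y : ℤ, ((c + 1, y) : ℤ × ℤ) ∈ P ∧ Relation.ReflTransGen R' (c + 1, y) q) := by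
    intro a ha
    induction ha using Relation.ReflTransGen.head_induction_on with
    | refl =>
      constructor
      · intro _ _; exact .refl
      · intro _ h; omega
    | head hstep _ ih =>
      rename_i x b _
      obtain ⟨hxP, hbP, hadj⟩ := hstep
      simp only [Finset.mem_coe] at hxP hbP
      rcases lt_or_ge c b.1 with hb | hb
      · constructor
        · intro hx hxc
          refine .head ⟨?_, ?_, hadj⟩ (ih.1 hbP hb)
          · simp only [Finset.mem_coe, mem_PGt]; exact ⟨hx, hxc⟩
          · simp only [Finset.mem_coe, mem_PGt]; exact ⟨hbP, hb⟩
        · intro hx hxc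
          have hb1 : b.1 = c + 1 := by unfold Adj at hadj; simp only [Int.abs_eq_natAbs] at hadj; omega
          refine ⟨b.2, ?_, ?_⟩
          · have : ((c + 1, b.2) : ℤ × ℤ) = b := by rw [← hb1]
            rw [this]; exact hbP
          · have : ((c + 1, b.2) : ℤ × ℤ) = b := by rw [← hb1]
            rw [this]; exact ih.1 hbP hb
      · obtain ⟨y, hyP, hypath⟩ := ih.2 hbP hb
        constructor
        · intro hx hxc
          have hx1 : x.1 = c + 1 ∧ x.2 = b.2 := by unfold Adj at hadj; simp only [Int.abs_eq_natAbs] at hadj; omega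
          have hxx : x = ((c + 1, x.2) : ℤ × ℤ) := by rw [← hx1.1]
          rw [hxx]
          refine Relation.ReflTransGen.trans ?_ hypath
          refine vertSeg _ (columnConvex_PGt hmono) (c + 1) x.2 y ?_ ?_
          · simp only [Finset.mem_coe, mem_PGt]
            exact ⟨by rw [← hxx]; exact hx, by omega⟩
          · simp only [Finset.mem_coe, mem_PGt]; exact ⟨hyP, by omega⟩
        · intro _ _; exact ⟨y, hyP, hypath⟩
  exact (key p hpath).1 hp.1 hp.2


/-- Cutting an x-monotone polyomino vertically at `c` (both pieces
nonempty) yields two x-monotone polyominoes, and `(P≤c, P>c)` is a valid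
vertical straight 2-cut of `P` at position `c`. -/
theorem stmt0 (P : Finset (ℤ × ℤ)) (c : ℤ)
    (hP : IsPolyomino P) (hmono : ColumnConvex ↑P)
    (h₁ : (PLe P c).Nonempty) (h₂ : (PGt P c).Nonempty) :
    (IsPolyomino (PLe P c) ∧ ColumnConvex ↑(PLe P c)) ∧
    (IsPolyomino (PGt P c) ∧ ColumnConvex ↑(PGt P c)) ∧
    ValidVCut P (PLe P c) (PGt P c) c := by
  obtain ⟨hne, hconn⟩ := hP
  have hL : GridConnected ↑(PLe P c) := gridConnected_PLe hconn hmono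
  have hG : GridConnected ↑(PGt P c) := gridConnected_PGt hconn hmono
  refine ⟨⟨⟨h₁, hL⟩, columnConvex_PLe hmono⟩, ⟨⟨h₂, hG⟩, columnConvex_PGt hmono⟩, ?_, ?_⟩
  · refine ⟨?_, ?_, h₁, h₂, hL, hG, ?_⟩
    · ext p; simp only [Finset.mem_union, mem_PLe, mem_PGt]
      constructor
      · rintro (h | h) <;> exact h.1
      · intro h; rcases le_or_gt p.1 c with h' | h'
        · exact Or.inl ⟨h, h'⟩
        · exact Or.inr ⟨h, h'⟩
    · rw [Finset.disjoint_left]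
      intro p hp hq
      rw [mem_PLe] at hp; rw [mem_PGt] at hq; omega
    · intro p hp q hq hadj
      rw [mem_PLe] at hp; rw [mem_PGt] at hq
      unfold Adj at hadj
      simp only [Int.abs_eq_natAbs] at hadj
      refine ⟨by omega, by omega, by omega⟩
  · intro k hk p hp hmem
    rw [mem_PGt] at hp
    rw [mem_PLe] at hmem
    simp only at hmem
    omega
end

section
/- Let P be an x-monotone polyomino and let c₁ < ⋯ < c_k be vertical cut positions that decompose P into parts that are all orthogonally convex. Then for every minimum (a, b, y₀) of the upper envelope of P and for every maximum (a, b, y₀) of the lower envelope of P, there is some index i with a ≤ c_i < b, i.e., some cut passes through it. -/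
/-- If vertical cut positions `C` decompose an x-monotone polyomino
`P` into orthogonally convex parts, then every minimum of the upper envelope and
every maximum of the lower envelope is passed through by some cut position. -/
theorem stmt1 (P : Finset (ℤ × ℤ)) (C : Finset ℤ)
    (hP : IsPolyomino P) (hmono : ColumnConvex ↑P)
    (hdec : Decomposes P C) :
    (∀ a b y₀ : ℤ, UpperEnvMin ↑P a b y₀ → ∃ c ∈ C, a ≤ c ∧ c < b) ∧
    (∀ a b y₀ : ℤ, LowerEnvMax ↑P a b y₀ → ∃ c ∈ C, a ≤ c ∧ c < b) := by
  constructor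
  · rintro a b y₀ ⟨hab, _, ha, hb, hmax⟩
    by_contra h
    push_neg at h
    have haP : (a, y₀ + 1) ∈ P := ha
    have hbP : (b, y₀ + 1) ∈ P := hb
    have hamem : (a, y₀ + 1) ∈ CutPart P C (a, y₀ + 1) :=
      Finset.mem_filter.2 ⟨haP, fun c _ => Iff.rfl⟩
    have hbmem : (b, y₀ + 1) ∈ CutPart P C (a, y₀ + 1) := by
      refine Finset.mem_filter.2 ⟨hbP, fun c hc => ?_⟩
      have := h c hc
      constructor
      · intro hbc; simp only at *; linarith
      · intro hac; simp only at *; linarith [this hac]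
    have hconv := (hdec (a, y₀ + 1) haP).2
    have hmid : ((a + 1 : ℤ), y₀ + 1) ∈ CutPart P C (a, y₀ + 1) :=
      hconv (y₀ + 1) a b (a + 1) hamem hbmem (by linarith) (by linarith)
    exact hmax (a + 1) (by linarith) (by linarith)
      (Finset.mem_coe.2 (Finset.mem_filter.1 hmid).1)
  · rintro a b y₀ ⟨hab, _, ha, hb, hmax⟩
    by_contra h
    push_neg at h
    have haP : (a, y₀ - 1) ∈ P := ha
    have hbP : (b, y₀ - 1) ∈ P := hb
    have hamem : (a, y₀ - 1) ∈ CutPart P C (a, y₀ - 1) :=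
      Finset.mem_filter.2 ⟨haP, fun c _ => Iff.rfl⟩
    have hbmem : (b, y₀ - 1) ∈ CutPart P C (a, y₀ - 1) := by
      refine Finset.mem_filter.2 ⟨hbP, fun c hc => ?_⟩
      have := h c hc
      constructor
      · intro hbc; simp only at *; linarith
      · intro hac; simp only at *; linarith [this hac]
    have hconv := (hdec (a, y₀ - 1) haP).2
    have hmid : ((a + 1 : ℤ), y₀ - 1) ∈ CutPart P C (a, y₀ - 1) :=
      hconv (y₀ - 1) a b (a + 1) hamem hbmem (by linarith) (by linarith)
    exact hmax (a + 1) (by linarith) (by linarith)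
      (Finset.mem_coe.2 (Finset.mem_filter.1 hmid).1)
end

section
/- For every x-monotone polyomino P, max(μ, ν) ≤ d(P) ≤ μ + ν, where μ is the number of minima of the upper envelope of P, ν is the number of maxima of the lower envelope of P, and d(P) is the decomposition number of P. -/
-- ====================== AUX ======================
section Aux2357
open Finset

private lemma adjCases2357 {p q : ℤ × ℤ} (h : Adj p q) :
    (q.1 = p.1 + 1 ∧ q.2 = p.2) ∨ (q.1 = p.1 - 1 ∧ q.2 = p.2) ∨
    (q.1 = p.1 ∧ q.2 = p.2 + 1) ∨ (q.1 = p.1 ∧ q.2 = p.2 - 1) := by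
  unfold Adj at h
  rcases abs_cases (p.1 - q.1) with ⟨e, _⟩ | ⟨e, _⟩ <;>
    rcases abs_cases (p.2 - q.2) with ⟨f, _⟩ | ⟨f, _⟩ <;> omega

private lemma crossing2357 {P : Finset (ℤ × ℤ)} (hP : GridConnected ↑P) {p q : ℤ × ℤ}
    (hp : p ∈ P) (hq : q ∈ P) {c : ℤ} (h1 : p.1 ≤ c) (h2 : c < q.1) :
    ∃ y : ℤ, (c, y) ∈ P ∧ (c + 1, y) ∈ P := by
  have h := hP p (by exact_mod_cast hp) q (by exact_mod_cast hq)
  clear hq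
  revert h2
  induction h with
  | refl => intro h2; omega
  | @tail b q hpb step ih =>
      intro h2
      obtain ⟨hbP, hqP, hadj⟩ := step
      by_cases hc : c < b.1
      · exact ih hc
      · push_neg at hc
        rcases adjCases2357 hadj with ⟨e1, e2⟩ | ⟨e1, e2⟩ | ⟨e1, e2⟩ | ⟨e1, e2⟩ <;>
          [skip; omega; omega; omega]
        have hb1 : b.1 = c := by omega
        refine ⟨b.2, ?_, ?_⟩
        · have : ((c, b.2) : ℤ × ℤ) = b := by rw [Prod.ext_iff]; exact ⟨hb1.symm, rfl⟩
          rw [this]; exact_mod_cast hbP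
        · have : ((c + 1, b.2) : ℤ × ℤ) = q := by rw [Prod.ext_iff]; constructor <;> simp <;> omega
          rw [this]; exact_mod_cast hqP

noncomputable def uEnv2357 (Q : Finset (ℤ × ℤ)) (x : ℤ) : ℤ :=
  if h : ((Q.filter (fun q => q.1 = x)).image Prod.snd).Nonempty
  then ((Q.filter (fun q => q.1 = x)).image Prod.snd).max' h else 0

noncomputable def lEnv2357 (Q : Finset (ℤ × ℤ)) (x : ℤ) : ℤ :=
  if h : ((Q.filter (fun q => q.1 = x)).image Prod.snd).Nonempty
  then ((Q.filter (fun q => q.1 = x)).image Prod.snd).min' h else 0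

private lemma memCol2357 {Q : Finset (ℤ × ℤ)} {x y : ℤ} :
    y ∈ (Q.filter (fun q => q.1 = x)).image Prod.snd ↔ (x, y) ∈ Q := by
  simp only [Finset.mem_image, Finset.mem_filter]
  constructor
  · rintro ⟨⟨qx, qy⟩, ⟨hq, h1⟩, h2⟩
    simp only at h1 h2
    subst h1; subst h2; exact hq
  · intro h; exact ⟨(x, y), ⟨h, rfl⟩, rfl⟩

private lemma le_uEnv2357 {Q : Finset (ℤ × ℤ)} {x y : ℤ} (h : (x, y) ∈ Q) :
    y ≤ uEnv2357 Q x := by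
  have hy := memCol2357.2 h
  have hne : ((Q.filter (fun q => q.1 = x)).image Prod.snd).Nonempty := ⟨y, hy⟩
  rw [uEnv2357, dif_pos hne]
  exact Finset.le_max' _ _ hy

private lemma lEnv_le2357 {Q : Finset (ℤ × ℤ)} {x y : ℤ} (h : (x, y) ∈ Q) :
    lEnv2357 Q x ≤ y := by
  have hy := memCol2357.2 h
  have hne : ((Q.filter (fun q => q.1 = x)).image Prod.snd).Nonempty := ⟨y, hy⟩
  rw [lEnv2357, dif_pos hne]
  exact Finset.min'_le _ _ hy

private lemma uEnv_mem2357 {Q : Finset (ℤ × ℤ)} {x y : ℤ} (h : (x, y) ∈ Q) :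
    (x, uEnv2357 Q x) ∈ Q := by
  have hy := memCol2357.2 h
  have hne : ((Q.filter (fun q => q.1 = x)).image Prod.snd).Nonempty := ⟨y, hy⟩
  rw [uEnv2357, dif_pos hne]
  exact memCol2357.1 (Finset.max'_mem _ hne)

private lemma lEnv_mem2357 {Q : Finset (ℤ × ℤ)} {x y : ℤ} (h : (x, y) ∈ Q) :
    (x, lEnv2357 Q x) ∈ Q := by
  have hy := memCol2357.2 h
  have hne : ((Q.filter (fun q => q.1 = x)).image Prod.snd).Nonempty := ⟨y, hy⟩
  rw [lEnv2357, dif_pos hne]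
  exact memCol2357.1 (Finset.min'_mem _ hne)


private lemma rowConvex2357 {Q : Finset (ℤ × ℤ)}
    (hcc : ColumnConvex ↑Q)
    (hovl : ∀ x y1 y2 : ℤ, (x, y1) ∈ Q → (x + 1, y2) ∈ Q → ∃ y, (x, y) ∈ Q ∧ (x + 1, y) ∈ Q)
    (hsup : ∀ x1 x2 x y1 y2 : ℤ, (x1, y1) ∈ Q → (x2, y2) ∈ Q → x1 ≤ x → x ≤ x2 →
      ∃ y, (x, y) ∈ Q)
    (hU : ∀ a b y₀ : ℤ, ¬ UpperEnvMin ↑Q a b y₀)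
    (hL : ∀ a b y₀ : ℤ, ¬ LowerEnvMax ↑Q a b y₀) :
    RowConvex ↑Q := by
  classical
  intro y x1 x2 x h1 h2 hx1 hx2
  simp only [Finset.mem_coe] at h1 h2 ⊢
  by_contra hxy
  obtain ⟨y', hy'⟩ := hsup x1 x2 x y y h1 h2 hx1 hx2
  have hside : uEnv2357 Q x < y ∨ y < lEnv2357 Q x := by
    by_contra hcon
    push_neg at hcon
    exact hxy (hcc x (lEnv2357 Q x) (uEnv2357 Q x) y (lEnv_mem2357 hy') (uEnv_mem2357 hy')
      hcon.2 hcon.1)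
  have hcol : ∀ x', x1 ≤ x' → x' ≤ x2 →
      (x', uEnv2357 Q x') ∈ Q ∧ (x', lEnv2357 Q x') ∈ Q := by
    intro x' ha hb
    obtain ⟨yy, hyy⟩ := hsup x1 x2 x' y y h1 h2 ha hb
    exact ⟨uEnv_mem2357 hyy, lEnv_mem2357 hyy⟩
  rcases hside with hA | hB
  · -- upper envelope has a dip
    set u := uEnv2357 Q with hu
    set T := (Finset.Icc x1 x2).filter (fun z => u z < y) with hT
    have hxT : x ∈ T := by
      simp only [hT, Finset.mem_filter, Finset.mem_Icc]
      exact ⟨⟨hx1, hx2⟩, hA⟩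
    obtain ⟨xs, hxsT, hxsmin⟩ := T.exists_min_image u ⟨x, hxT⟩
    simp only [hT, Finset.mem_filter, Finset.mem_Icc] at hxsT
    set y₀ := u xs with hy₀
    have hu1 : y ≤ u x1 := le_uEnv2357 h1
    have hu2 : y ≤ u x2 := le_uEnv2357 h2
    -- the minimum over T
    have hTmin : ∀ z, x1 ≤ z → z ≤ x2 → u z < y → y₀ ≤ u z := by
      intro z hz1 hz2 hzy
      exact hxsmin z (by simp only [hT, Finset.mem_filter, Finset.mem_Icc]; exact ⟨⟨hz1, hz2⟩, hzy⟩)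
    -- left boundary a
    set SA := (Finset.Icc x1 (xs - 1)).filter (fun z => y₀ < u z) with hSA
    have hx1SA : x1 ∈ SA := by
      have hne : x1 ≠ xs := by
        intro h; rw [h] at hu1; omega
      simp only [hSA, Finset.mem_filter, Finset.mem_Icc]
      exact ⟨⟨le_refl _, by omega⟩, by omega⟩
    obtain ⟨a, haSA, hamax⟩ := SA.exists_max_image id ⟨x1, hx1SA⟩
    simp only [hSA, Finset.mem_filter, Finset.mem_Icc] at haSA
    -- right boundary b
    set SB := (Finset.Icc (xs + 1) x2).filter (fun z => y₀ < u z) with hSB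
    have hx2SB : x2 ∈ SB := by
      have hne : x2 ≠ xs := by
        intro h; rw [h] at hu2; omega
      simp only [hSB, Finset.mem_filter, Finset.mem_Icc]
      exact ⟨⟨by omega, le_refl _⟩, by omega⟩
    obtain ⟨b, hbSB, hbmin⟩ := SB.exists_min_image id ⟨x2, hx2SB⟩
    simp only [hSB, Finset.mem_filter, Finset.mem_Icc] at hbSB
    have hab : a + 2 ≤ b := by omega
    -- constancy on the interior
    have hconst : ∀ z, a < z → z < b → u z = y₀ := by
      intro z hz1 hz2
      have hz1' : x1 ≤ z := by omega
      have hz2' : z ≤ x2 := by omega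
      have hle : u z ≤ y₀ := by
        by_contra hgt
        push_neg at hgt
        rcases le_or_gt z (xs - 1) with hzl | hzr
        · have : z ∈ SA := by
            simp only [hSA, Finset.mem_filter, Finset.mem_Icc]; exact ⟨⟨hz1', hzl⟩, hgt⟩
          have := hamax z this; simp only [id] at this; omega
        · rcases eq_or_lt_of_le (by omega : xs ≤ z) with hzeq | hzgt
          · rw [← hzeq] at hgt; omega
          · have : z ∈ SB := by
              simp only [hSB, Finset.mem_filter, Finset.mem_Icc]; exact ⟨⟨by omega, hz2'⟩, hgt⟩
            have := hbmin z this; simp only [id] at this; omega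
      have hge : y₀ ≤ u z := hTmin z hz1' hz2' (by omega)
      omega
    -- x-range facts
    have hax : x1 ≤ a ∧ a ≤ x2 := ⟨haSA.1.1, by omega⟩
    have hbx : x1 ≤ b ∧ b ≤ x2 := ⟨by omega, hbSB.1.2⟩
    -- endpoint columns reach down to y₀
    have hendA : ((a, y₀) : ℤ × ℤ) ∈ Q ∧ ((a, y₀ + 1) : ℤ × ℤ) ∈ Q := by
      obtain ⟨yc, hyc1, hyc2⟩ := hovl a _ _ (hcol a hax.1 hax.2).1
        (hcol (a + 1) (by omega) (by omega)).1
      have hyc : yc ≤ y₀ := by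
        have := le_uEnv2357 hyc2
        rw [← hu] at this
        rw [hconst (a + 1) (by omega) (by omega)] at this
        exact this
      have hua : y₀ + 1 ≤ u a := haSA.2
      constructor
      · exact hcc a yc (u a) y₀ hyc1 (hcol a hax.1 hax.2).1 hyc (by omega)
      · exact hcc a yc (u a) (y₀ + 1) hyc1 (hcol a hax.1 hax.2).1 (by omega) hua
    have hendB : ((b, y₀) : ℤ × ℤ) ∈ Q ∧ ((b, y₀ + 1) : ℤ × ℤ) ∈ Q := by
      obtain ⟨yc, hyc1, hyc2⟩ := hovl (b - 1) _ _ (hcol (b - 1) (by omega) (by omega)).1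
        (by
          have := (hcol b hbx.1 hbx.2).1
          have he : (b - 1 + 1 : ℤ) = b := by ring
          rw [he]; exact this)
      have hyc : yc ≤ y₀ := by
        have := le_uEnv2357 hyc1
        rw [← hu] at this
        rw [hconst (b - 1) (by omega) (by omega)] at this
        exact this
      have hub : y₀ + 1 ≤ u b := hbSB.2
      have he : (b - 1 + 1 : ℤ) = b := by ring
      rw [he] at hyc2
      constructor
      · exact hcc b yc (u b) y₀ hyc2 (hcol b hbx.1 hbx.2).1 hyc (by omega)
      · exact hcc b yc (u b) (y₀ + 1) hyc2 (hcol b hbx.1 hbx.2).1 (by omega) hub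
    -- build the forbidden minimum
    refine hU a b y₀ ⟨hab, ?_, hendA.2, hendB.2, ?_⟩
    · intro z hz1 hz2
      rcases eq_or_lt_of_le hz1 with hza | hza
      · rw [← hza]; exact hendA.1
      · rcases eq_or_lt_of_le hz2 with hzb | hzb
        · rw [hzb]; exact hendB.1
        · have hz := hconst z hza hzb
          have := (hcol z (by omega) (by omega)).1
          rw [hz] at this
          exact this
    · intro z hz1 hz2 hmem
      have := le_uEnv2357 (show ((z, y₀ + 1) : ℤ × ℤ) ∈ Q from hmem)
      rw [← hu] at this
      rw [hconst z hz1 hz2] at this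
      omega
  · -- lower envelope has a bump (mirror)
    set l := lEnv2357 Q with hl
    set T := (Finset.Icc x1 x2).filter (fun z => y < l z) with hT
    have hxT : x ∈ T := by
      simp only [hT, Finset.mem_filter, Finset.mem_Icc]
      exact ⟨⟨hx1, hx2⟩, hB⟩
    obtain ⟨xs, hxsT, hxsmax⟩ := T.exists_max_image l ⟨x, hxT⟩
    simp only [hT, Finset.mem_filter, Finset.mem_Icc] at hxsT
    set y₀ := l xs with hy₀
    have hu1 : l x1 ≤ y := lEnv_le2357 h1
    have hu2 : l x2 ≤ y := lEnv_le2357 h2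
    have hTmax : ∀ z, x1 ≤ z → z ≤ x2 → y < l z → l z ≤ y₀ := by
      intro z hz1 hz2 hzy
      exact hxsmax z (by simp only [hT, Finset.mem_filter, Finset.mem_Icc]; exact ⟨⟨hz1, hz2⟩, hzy⟩)
    set SA := (Finset.Icc x1 (xs - 1)).filter (fun z => l z < y₀) with hSA
    have hx1SA : x1 ∈ SA := by
      have hne : x1 ≠ xs := by
        intro h; rw [h] at hu1; omega
      simp only [hSA, Finset.mem_filter, Finset.mem_Icc]
      exact ⟨⟨le_refl _, by omega⟩, by omega⟩
    obtain ⟨a, haSA, hamax⟩ := SA.exists_max_image id ⟨x1, hx1SA⟩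
    simp only [hSA, Finset.mem_filter, Finset.mem_Icc] at haSA
    set SB := (Finset.Icc (xs + 1) x2).filter (fun z => l z < y₀) with hSB
    have hx2SB : x2 ∈ SB := by
      have hne : x2 ≠ xs := by
        intro h; rw [h] at hu2; omega
      simp only [hSB, Finset.mem_filter, Finset.mem_Icc]
      exact ⟨⟨by omega, le_refl _⟩, by omega⟩
    obtain ⟨b, hbSB, hbmin⟩ := SB.exists_min_image id ⟨x2, hx2SB⟩
    simp only [hSB, Finset.mem_filter, Finset.mem_Icc] at hbSB
    have hab : a + 2 ≤ b := by omega
    have hconst : ∀ z, a < z → z < b → l z = y₀ := by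
      intro z hz1 hz2
      have hz1' : x1 ≤ z := by omega
      have hz2' : z ≤ x2 := by omega
      have hge : y₀ ≤ l z := by
        by_contra hgt
        push_neg at hgt
        rcases le_or_gt z (xs - 1) with hzl | hzr
        · have : z ∈ SA := by
            simp only [hSA, Finset.mem_filter, Finset.mem_Icc]; exact ⟨⟨hz1', hzl⟩, hgt⟩
          have := hamax z this; simp only [id] at this; omega
        · rcases eq_or_lt_of_le (by omega : xs ≤ z) with hzeq | hzgt
          · rw [← hzeq] at hgt; omega
          · have : z ∈ SB := by
              simp only [hSB, Finset.mem_filter, Finset.mem_Icc]; exact ⟨⟨by omega, hz2'⟩, hgt⟩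
            have := hbmin z this; simp only [id] at this; omega
      have hle : l z ≤ y₀ := hTmax z hz1' hz2' (by omega)
      omega
    have hax : x1 ≤ a ∧ a ≤ x2 := ⟨haSA.1.1, by omega⟩
    have hbx : x1 ≤ b ∧ b ≤ x2 := ⟨by omega, hbSB.1.2⟩
    have hendA : ((a, y₀) : ℤ × ℤ) ∈ Q ∧ ((a, y₀ - 1) : ℤ × ℤ) ∈ Q := by
      obtain ⟨yc, hyc1, hyc2⟩ := hovl a _ _ (hcol a hax.1 hax.2).2
        (hcol (a + 1) (by omega) (by omega)).2
      have hyc : y₀ ≤ yc := by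
        have := lEnv_le2357 hyc2
        rw [← hl] at this
        rw [hconst (a + 1) (by omega) (by omega)] at this
        exact this
      have hua : l a ≤ y₀ - 1 := by omega
      constructor
      · exact hcc a (l a) yc y₀ (hcol a hax.1 hax.2).2 hyc1 (by omega) hyc
      · exact hcc a (l a) yc (y₀ - 1) (hcol a hax.1 hax.2).2 hyc1 hua (by omega)
    have hendB : ((b, y₀) : ℤ × ℤ) ∈ Q ∧ ((b, y₀ - 1) : ℤ × ℤ) ∈ Q := by
      obtain ⟨yc, hyc1, hyc2⟩ := hovl (b - 1) _ _ (hcol (b - 1) (by omega) (by omega)).2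
        (by
          have := (hcol b hbx.1 hbx.2).2
          have he : (b - 1 + 1 : ℤ) = b := by ring
          rw [he]; exact this)
      have hyc : y₀ ≤ yc := by
        have := lEnv_le2357 hyc1
        rw [← hl] at this
        rw [hconst (b - 1) (by omega) (by omega)] at this
        exact this
      have hub : l b ≤ y₀ - 1 := by omega
      have he : (b - 1 + 1 : ℤ) = b := by ring
      rw [he] at hyc2
      constructor
      · exact hcc b (l b) yc y₀ (hcol b hbx.1 hbx.2).2 hyc2 (by omega) hyc
      · exact hcc b (l b) yc (y₀ - 1) (hcol b hbx.1 hbx.2).2 hyc2 hub (by omega)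
    refine hL a b y₀ ⟨hab, ?_, hendA.2, hendB.2, ?_⟩
    · intro z hz1 hz2
      rcases eq_or_lt_of_le hz1 with hza | hza
      · rw [← hza]; exact hendA.1
      · rcases eq_or_lt_of_le hz2 with hzb | hzb
        · rw [hzb]; exact hendB.1
        · have hz := hconst z hza hzb
          have := (hcol z (by omega) (by omega)).2
          rw [hz] at this
          exact this
    · intro z hz1 hz2 hmem
      have := lEnv_le2357 (show ((z, y₀ - 1) : ℤ × ℤ) ∈ Q from hmem)
      rw [← hl] at this
      rw [hconst z hz1 hz2] at this
      omega

-- interior bound lemmas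
private lemma uMin_int2357 {P : Finset (ℤ × ℤ)} (hmono : ColumnConvex ↑P) {a b y₀ : ℤ}
    (h : UpperEnvMin ↑P a b y₀) {x yy : ℤ} (hax : a < x) (hxb : x < b)
    (hy : (x, yy) ∈ P) : yy ≤ y₀ := by
  by_contra hc
  push_neg at hc
  exact h.2.2.2.2 x hax hxb
    (hmono x y₀ yy (y₀ + 1) (h.2.1 x (by omega) (by omega)) hy (by omega) (by omega))

private lemma lMax_int2357 {P : Finset (ℤ × ℤ)} (hmono : ColumnConvex ↑P) {a b y₀ : ℤ}
    (h : LowerEnvMax ↑P a b y₀) {x yy : ℤ} (hax : a < x) (hxb : x < b)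
    (hy : (x, yy) ∈ P) : y₀ ≤ yy := by
  by_contra hc
  push_neg at hc
  exact h.2.2.2.2 x hax hxb
    (hmono x yy y₀ (y₀ - 1) hy (h.2.1 x (by omega) (by omega)) (by omega) (by omega))

private lemma uMin_uniq_aux2357 {P : Finset (ℤ × ℤ)} (hmono : ColumnConvex ↑P)
    {a b y₀ a' b' y₀' : ℤ} (h : UpperEnvMin ↑P a b y₀) (h' : UpperEnvMin ↑P a' b' y₀')
    (haa : a ≤ a') {c : ℤ} (hc1 : a ≤ c) (hc2 : c < b) (hc3 : a' ≤ c) (hc4 : c < b') :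
    a = a' ∧ b = b' ∧ y₀ = y₀' := by
  have hW : a + 2 ≤ b := h.1
  have hW' : a' + 2 ≤ b' := h'.1
  rcases eq_or_lt_of_le haa with heq | hlt
  · subst heq
    have e1 : y₀' ≤ y₀ := uMin_int2357 hmono h (by omega) (by omega)
      (h'.2.1 (a + 1) (by omega) (by omega))
    have e2 : y₀ ≤ y₀' := uMin_int2357 hmono h' (by omega) (by omega)
      (h.2.1 (a + 1) (by omega) (by omega))
    have ey : y₀ = y₀' := le_antisymm e2 e1
    refine ⟨rfl, ?_, ey⟩
    rcases lt_trichotomy b b' with hbb | hbb | hbb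
    · exfalso
      have := uMin_int2357 hmono h' (by omega) hbb h.2.2.2.1
      omega
    · exact hbb
    · exfalso
      have := uMin_int2357 hmono h (by omega) hbb h'.2.2.2.1
      omega
  · exfalso
    have e1 : y₀' + 1 ≤ y₀ := uMin_int2357 hmono h hlt (by omega) h'.2.2.1
    have hgap : ((a' + 1, y₀' + 1) : ℤ × ℤ) ∉ (↑P : Set (ℤ × ℤ)) :=
      h'.2.2.2.2 (a' + 1) (by omega) (by omega)
    have hrow' : ((a' + 1, y₀') : ℤ × ℤ) ∈ (↑P : Set (ℤ × ℤ)) :=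
      h'.2.1 (a' + 1) (by omega) (by omega)
    rcases lt_or_eq_of_le (show a' + 1 ≤ b by omega) with hlt2 | heq2
    · exact hgap (hmono (a' + 1) y₀' y₀ (y₀' + 1) hrow'
        (h.2.1 (a' + 1) (by omega) (by omega)) (by omega) (by omega))
    · have hb : ((a' + 1, y₀ + 1) : ℤ × ℤ) ∈ (↑P : Set (ℤ × ℤ)) := by
        rw [heq2]; exact h.2.2.2.1
      exact hgap (hmono (a' + 1) y₀' (y₀ + 1) (y₀' + 1) hrow' hb (by omega) (by omega))

private lemma lMax_uniq_aux2357 {P : Finset (ℤ × ℤ)} (hmono : ColumnConvex ↑P)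
    {a b y₀ a' b' y₀' : ℤ} (h : LowerEnvMax ↑P a b y₀) (h' : LowerEnvMax ↑P a' b' y₀')
    (haa : a ≤ a') {c : ℤ} (hc1 : a ≤ c) (hc2 : c < b) (hc3 : a' ≤ c) (hc4 : c < b') :
    a = a' ∧ b = b' ∧ y₀ = y₀' := by
  have hW : a + 2 ≤ b := h.1
  have hW' : a' + 2 ≤ b' := h'.1
  rcases eq_or_lt_of_le haa with heq | hlt
  · subst heq
    have e1 : y₀ ≤ y₀' := lMax_int2357 hmono h (by omega) (by omega)
      (h'.2.1 (a + 1) (by omega) (by omega))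
    have e2 : y₀' ≤ y₀ := lMax_int2357 hmono h' (by omega) (by omega)
      (h.2.1 (a + 1) (by omega) (by omega))
    have ey : y₀ = y₀' := le_antisymm e1 e2
    refine ⟨rfl, ?_, ey⟩
    rcases lt_trichotomy b b' with hbb | hbb | hbb
    · exfalso
      have := lMax_int2357 hmono h' (by omega) hbb h.2.2.2.1
      omega
    · exact hbb
    · exfalso
      have := lMax_int2357 hmono h (by omega) hbb h'.2.2.2.1
      omega
  · exfalso
    have e1 : y₀ ≤ y₀' - 1 := lMax_int2357 hmono h hlt (by omega) h'.2.2.1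
    have hgap : ((a' + 1, y₀' - 1) : ℤ × ℤ) ∉ (↑P : Set (ℤ × ℤ)) :=
      h'.2.2.2.2 (a' + 1) (by omega) (by omega)
    have hrow' : ((a' + 1, y₀') : ℤ × ℤ) ∈ (↑P : Set (ℤ × ℤ)) :=
      h'.2.1 (a' + 1) (by omega) (by omega)
    rcases lt_or_eq_of_le (show a' + 1 ≤ b by omega) with hlt2 | heq2
    · exact hgap (hmono (a' + 1) y₀ y₀' (y₀' - 1) (h.2.1 (a' + 1) (by omega) (by omega))
        hrow' (by omega) (by omega))
    · have hb : ((a' + 1, y₀ - 1) : ℤ × ℤ) ∈ (↑P : Set (ℤ × ℤ)) := by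
        rw [heq2]; exact h.2.2.2.1
      exact hgap (hmono (a' + 1) (y₀ - 1) y₀' (y₀' - 1) hb hrow' (by omega) (by omega))

private lemma uMin_uniq2357 {P : Finset (ℤ × ℤ)} (hmono : ColumnConvex ↑P)
    {a b y₀ a' b' y₀' : ℤ} (h : UpperEnvMin ↑P a b y₀) (h' : UpperEnvMin ↑P a' b' y₀')
    {c : ℤ} (hc1 : a ≤ c) (hc2 : c < b) (hc3 : a' ≤ c) (hc4 : c < b') :
    a = a' ∧ b = b' ∧ y₀ = y₀' := by
  rcases le_total a a' with hle | hle
  · exact uMin_uniq_aux2357 hmono h h' hle hc1 hc2 hc3 hc4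
  · obtain ⟨e1, e2, e3⟩ := uMin_uniq_aux2357 hmono h' h hle hc3 hc4 hc1 hc2
    exact ⟨e1.symm, e2.symm, e3.symm⟩

private lemma lMax_uniq2357 {P : Finset (ℤ × ℤ)} (hmono : ColumnConvex ↑P)
    {a b y₀ a' b' y₀' : ℤ} (h : LowerEnvMax ↑P a b y₀) (h' : LowerEnvMax ↑P a' b' y₀')
    {c : ℤ} (hc1 : a ≤ c) (hc2 : c < b) (hc3 : a' ≤ c) (hc4 : c < b') :
    a = a' ∧ b = b' ∧ y₀ = y₀' := by
  rcases le_total a a' with hle | hle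
  · exact lMax_uniq_aux2357 hmono h h' hle hc1 hc2 hc3 hc4
  · obtain ⟨e1, e2, e3⟩ := lMax_uniq_aux2357 hmono h' h hle hc3 hc4 hc1 hc2
    exact ⟨e1.symm, e2.symm, e3.symm⟩

-- every envelope extremum forces a cut
private lemma uMin_forces2357 {P : Finset (ℤ × ℤ)} {C : Finset ℤ}
    (hdec : Decomposes P C) {a b y₀ : ℤ} (h : UpperEnvMin ↑P a b y₀) :
    ∃ c ∈ C, a ≤ c ∧ c < b := by
  have hW : a + 2 ≤ b := h.1
  by_contra hno
  push_neg at hno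
  have hpa : ((a, y₀ + 1) : ℤ × ℤ) ∈ P := h.2.2.1
  have hQ := hdec (a, y₀ + 1) hpa
  have hiff : ∀ c ∈ C, ∀ z : ℤ, a ≤ z → z ≤ b → (z ≤ c ↔ a ≤ c) := by
    intro c hcC z hz1 hz2
    have := hno c hcC
    constructor <;> intro <;> omega
  have hamem : ((a, y₀ + 1) : ℤ × ℤ) ∈ CutPart P C (a, y₀ + 1) := by
    rw [CutPart, Finset.mem_filter]
    exact ⟨hpa, fun c _ => Iff.rfl⟩
  have hbmem : ((b, y₀ + 1) : ℤ × ℤ) ∈ CutPart P C (a, y₀ + 1) := by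
    rw [CutPart, Finset.mem_filter]
    exact ⟨h.2.2.2.1, fun c hcC => hiff c hcC b (by omega) (by omega)⟩
  have hmid := hQ.2 (y₀ + 1) a b (a + 1) hamem hbmem (by omega) (by omega)
  have : ((a + 1, y₀ + 1) : ℤ × ℤ) ∈ P := by
    have := Finset.mem_coe.1 hmid
    exact Finset.mem_filter.1 this |>.1
  exact h.2.2.2.2 (a + 1) (by omega) (by omega) this

private lemma lMax_forces2357 {P : Finset (ℤ × ℤ)} {C : Finset ℤ}
    (hdec : Decomposes P C) {a b y₀ : ℤ} (h : LowerEnvMax ↑P a b y₀) :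
    ∃ c ∈ C, a ≤ c ∧ c < b := by
  have hW : a + 2 ≤ b := h.1
  by_contra hno
  push_neg at hno
  have hpa : ((a, y₀ - 1) : ℤ × ℤ) ∈ P := h.2.2.1
  have hQ := hdec (a, y₀ - 1) hpa
  have hiff : ∀ c ∈ C, ∀ z : ℤ, a ≤ z → z ≤ b → (z ≤ c ↔ a ≤ c) := by
    intro c hcC z hz1 hz2
    have := hno c hcC
    constructor <;> intro <;> omega
  have hamem : ((a, y₀ - 1) : ℤ × ℤ) ∈ CutPart P C (a, y₀ - 1) := by
    rw [CutPart, Finset.mem_filter]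
    exact ⟨hpa, fun c _ => Iff.rfl⟩
  have hbmem : ((b, y₀ - 1) : ℤ × ℤ) ∈ CutPart P C (a, y₀ - 1) := by
    rw [CutPart, Finset.mem_filter]
    exact ⟨h.2.2.2.1, fun c hcC => hiff c hcC b (by omega) (by omega)⟩
  have hmid := hQ.2 (y₀ - 1) a b (a + 1) hamem hbmem (by omega) (by omega)
  have : ((a + 1, y₀ - 1) : ℤ × ℤ) ∈ P := by
    have := Finset.mem_coe.1 hmid
    exact Finset.mem_filter.1 this |>.1
  exact h.2.2.2.2 (a + 1) (by omega) (by omega) this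

-- counting lemmas
private lemma uMin_count2357 {P : Finset (ℤ × ℤ)} (hmono : ColumnConvex ↑P)
    {C : Finset ℤ} (hdec : Decomposes P C) :
    Set.ncard {t : ℤ × ℤ × ℤ | UpperEnvMin ↑P t.1 t.2.1 t.2.2} ≤ C.card := by
  classical
  set S := {t : ℤ × ℤ × ℤ | UpperEnvMin ↑P t.1 t.2.1 t.2.2} with hS
  set g : ℤ × ℤ × ℤ → ℤ := fun t =>
    if h : ∃ c ∈ C, t.1 ≤ c ∧ c < t.2.1 then h.choose else 0 with hg
  have hgood : ∀ t ∈ S, g t ∈ C ∧ t.1 ≤ g t ∧ g t < t.2.1 := by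
    intro t ht
    have hex : ∃ c ∈ C, t.1 ≤ c ∧ c < t.2.1 := uMin_forces2357 hdec ht
    simp only [hg, dif_pos hex]
    exact ⟨hex.choose_spec.1, hex.choose_spec.2.1, hex.choose_spec.2.2⟩
  rw [← Set.ncard_coe_finset C]
  apply Set.ncard_le_ncard_of_injOn g (fun t ht => (hgood t ht).1) _ (C.finite_toSet)
  intro t ht t' ht' he
  obtain ⟨_, h1, h2⟩ := hgood t ht
  obtain ⟨_, h3, h4⟩ := hgood t' ht'
  rw [he] at h1 h2
  obtain ⟨e1, e2, e3⟩ := uMin_uniq2357 hmono ht ht' h1 h2 h3 h4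
  exact Prod.ext e1 (Prod.ext e2 e3)

private lemma lMax_count2357 {P : Finset (ℤ × ℤ)} (hmono : ColumnConvex ↑P)
    {C : Finset ℤ} (hdec : Decomposes P C) :
    Set.ncard {t : ℤ × ℤ × ℤ | LowerEnvMax ↑P t.1 t.2.1 t.2.2} ≤ C.card := by
  classical
  set S := {t : ℤ × ℤ × ℤ | LowerEnvMax ↑P t.1 t.2.1 t.2.2} with hS
  set g : ℤ × ℤ × ℤ → ℤ := fun t =>
    if h : ∃ c ∈ C, t.1 ≤ c ∧ c < t.2.1 then h.choose else 0 with hg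
  have hgood : ∀ t ∈ S, g t ∈ C ∧ t.1 ≤ g t ∧ g t < t.2.1 := by
    intro t ht
    have hex : ∃ c ∈ C, t.1 ≤ c ∧ c < t.2.1 := lMax_forces2357 hdec ht
    simp only [hg, dif_pos hex]
    exact ⟨hex.choose_spec.1, hex.choose_spec.2.1, hex.choose_spec.2.2⟩
  rw [← Set.ncard_coe_finset C]
  apply Set.ncard_le_ncard_of_injOn g (fun t ht => (hgood t ht).1) _ (C.finite_toSet)
  intro t ht t' ht' he
  obtain ⟨_, h1, h2⟩ := hgood t ht
  obtain ⟨_, h3, h4⟩ := hgood t' ht'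
  rw [he] at h1 h2
  obtain ⟨e1, e2, e3⟩ := lMax_uniq2357 hmono ht ht' h1 h2 h3 h4
  exact Prod.ext e1 (Prod.ext e2 e3)

-- finiteness of the extrema sets
private lemma uMin_finite2357 (P : Finset (ℤ × ℤ)) :
    {t : ℤ × ℤ × ℤ | UpperEnvMin ↑P t.1 t.2.1 t.2.2}.Finite := by
  apply Set.Finite.of_finite_image
    (f := fun t : ℤ × ℤ × ℤ => (((t.1, t.2.2 + 1) : ℤ × ℤ), ((t.2.1, t.2.2 + 1) : ℤ × ℤ)))
  · apply Set.Finite.subset (P.finite_toSet.prod P.finite_toSet)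
    rintro _ ⟨t, ht, rfl⟩
    exact ⟨ht.2.2.1, ht.2.2.2.1⟩
  · intro t _ t' _ h
    simp only [Prod.ext_iff] at h ⊢
    obtain ⟨⟨h1, h2⟩, ⟨h3, _⟩⟩ := h
    exact ⟨h1, h3, by omega⟩

private lemma lMax_finite2357 (P : Finset (ℤ × ℤ)) :
    {t : ℤ × ℤ × ℤ | LowerEnvMax ↑P t.1 t.2.1 t.2.2}.Finite := by
  apply Set.Finite.of_finite_image
    (f := fun t : ℤ × ℤ × ℤ => (((t.1, t.2.2 - 1) : ℤ × ℤ), ((t.2.1, t.2.2 - 1) : ℤ × ℤ)))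
  · apply Set.Finite.subset (P.finite_toSet.prod P.finite_toSet)
    rintro _ ⟨t, ht, rfl⟩
    exact ⟨ht.2.2.1, ht.2.2.2.1⟩
  · intro t _ t' _ h
    simp only [Prod.ext_iff] at h ⊢
    obtain ⟨⟨h1, h2⟩, ⟨h3, _⟩⟩ := h
    exact ⟨h1, h3, by omega⟩

private noncomputable def cutSet2357 (P : Finset (ℤ × ℤ)) : Finset ℤ :=
  ((uMin_finite2357 P).toFinset.image (fun t => t.1)) ∪
  ((lMax_finite2357 P).toFinset.image (fun t => t.1))

private lemma cutSet_card2357 (P : Finset (ℤ × ℤ)) :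
    (cutSet2357 P).card ≤
      Set.ncard {t : ℤ × ℤ × ℤ | UpperEnvMin ↑P t.1 t.2.1 t.2.2} +
      Set.ncard {t : ℤ × ℤ × ℤ | LowerEnvMax ↑P t.1 t.2.1 t.2.2} := by
  rw [Set.ncard_eq_toFinset_card _ (uMin_finite2357 P),
    Set.ncard_eq_toFinset_card _ (lMax_finite2357 P)]
  calc (cutSet2357 P).card
      ≤ ((uMin_finite2357 P).toFinset.image (fun t => t.1)).card +
        ((lMax_finite2357 P).toFinset.image (fun t => t.1)).card := Finset.card_union_le _ _
    _ ≤ _ := add_le_add (Finset.card_image_le) (Finset.card_image_le)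

private lemma cutSet_decomposes2357 (P : Finset (ℤ × ℤ)) (hP : IsPolyomino P)
    (hmono : ColumnConvex ↑P) : Decomposes P (cutSet2357 P) := by
  classical
  intro p hp
  set C := cutSet2357 P with hC
  set Q := CutPart P C p with hQdef
  have hmemQ : ∀ q : ℤ × ℤ, q ∈ Q ↔ q ∈ P ∧ ∀ c ∈ C, (q.1 ≤ c ↔ p.1 ≤ c) := by
    intro q
    rw [hQdef, CutPart, Finset.mem_filter]
  -- column convexity of the part
  have hccQ : ColumnConvex ↑Q := by
    intro x y1 y2 yy hm1 hm2 hle1 hle2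
    rw [Finset.mem_coe, hmemQ] at hm1 hm2 ⊢
    exact ⟨hmono x y1 y2 yy hm1.1 hm2.1 hle1 hle2, hm1.2⟩
  refine ⟨hccQ, ?_⟩
  apply rowConvex2357 hccQ
  · -- hovl
    intro x y1 y2 hm1 hm2
    rw [hmemQ] at hm1 hm2
    obtain ⟨yy, hyy1, hyy2⟩ := crossing2357 hP.2 hm1.1 hm2.1 (le_refl x)
      (show (x : ℤ) < ((x + 1, y2) : ℤ × ℤ).1 by simp)
    exact ⟨yy, (hmemQ _).2 ⟨hyy1, hm1.2⟩, (hmemQ _).2 ⟨hyy2, hm2.2⟩⟩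
  · -- hsup
    intro x1 x2 x y1 y2 hm1 hm2 hle1 hle2
    rw [hmemQ] at hm1 hm2
    have hcond : ∀ c ∈ C, ((x : ℤ) ≤ c ↔ p.1 ≤ c) := by
      intro c hcC
      constructor
      · intro hxc
        exact (hm1.2 c hcC).1 (by omega)
      · intro hpc
        have := (hm2.2 c hcC).2 hpc
        omega
    rcases eq_or_lt_of_le hle2 with heq | hlt
    · exact ⟨y2, (hmemQ _).2 ⟨by rw [heq]; exact hm2.1, hcond⟩⟩
    · obtain ⟨yy, hyy1, _⟩ := crossing2357 hP.2 hm1.1 hm2.1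
        (show ((x1, y1) : ℤ × ℤ).1 ≤ x from hle1)
        (show (x : ℤ) < ((x2, y2) : ℤ × ℤ).1 from hlt)
      exact ⟨yy, (hmemQ _).2 ⟨hyy1, hcond⟩⟩
  · -- no upper envelope minimum in the part
    intro a b y₀ hmin
    have hrowQ : ∀ z : ℤ, a ≤ z → z ≤ b → ((z, y₀) : ℤ × ℤ) ∈ Q := fun z h1 h2 =>
      hmin.2.1 z h1 h2
    have hminP : UpperEnvMin ↑P a b y₀ := by
      refine ⟨hmin.1, ?_, ?_, ?_, ?_⟩
      · intro z h1 h2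
        exact ((hmemQ _).1 (hrowQ z h1 h2)).1
      · exact ((hmemQ _).1 hmin.2.2.1).1
      · exact ((hmemQ _).1 hmin.2.2.2.1).1
      · intro z h1 h2 hmem
        refine hmin.2.2.2.2 z h1 h2 ?_
        have hcond := ((hmemQ _).1 (hrowQ z (by omega) (by omega))).2
        exact (hmemQ _).2 ⟨hmem, hcond⟩
    have haC : a ∈ C := by
      rw [hC, cutSet2357]
      apply Finset.mem_union_left
      exact Finset.mem_image.2 ⟨(a, b, y₀), by rw [Set.Finite.mem_toFinset]; exact hminP, rfl⟩
    have hW : a + 2 ≤ b := hmin.1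
    have c1 := ((hmemQ _).1 (hrowQ a (le_refl a) (by omega))).2 a haC
    have c2 := ((hmemQ _).1 (hrowQ (a + 1) (by omega) (by omega))).2 a haC
    have : (a + 1 : ℤ) ≤ a := c2.2 (c1.1 (le_refl a))
    omega
  · -- no lower envelope maximum in the part
    intro a b y₀ hmax
    have hrowQ : ∀ z : ℤ, a ≤ z → z ≤ b → ((z, y₀) : ℤ × ℤ) ∈ Q := fun z h1 h2 =>
      hmax.2.1 z h1 h2
    have hmaxP : LowerEnvMax ↑P a b y₀ := by
      refine ⟨hmax.1, ?_, ?_, ?_, ?_⟩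
      · intro z h1 h2
        exact ((hmemQ _).1 (hrowQ z h1 h2)).1
      · exact ((hmemQ _).1 hmax.2.2.1).1
      · exact ((hmemQ _).1 hmax.2.2.2.1).1
      · intro z h1 h2 hmem
        refine hmax.2.2.2.2 z h1 h2 ?_
        have hcond := ((hmemQ _).1 (hrowQ z (by omega) (by omega))).2
        exact (hmemQ _).2 ⟨hmem, hcond⟩
    have haC : a ∈ C := by
      rw [hC, cutSet2357]
      apply Finset.mem_union_right
      exact Finset.mem_image.2 ⟨(a, b, y₀), by rw [Set.Finite.mem_toFinset]; exact hmaxP, rfl⟩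
    have hW : a + 2 ≤ b := hmax.1
    have c1 := ((hmemQ _).1 (hrowQ a (le_refl a) (by omega))).2 a haC
    have c2 := ((hmemQ _).1 (hrowQ (a + 1) (by omega) (by omega))).2 a haC
    have : (a + 1 : ℤ) ≤ a := c2.2 (c1.1 (le_refl a))
    omega


/-- For an x-monotone polyomino `P`,
`max(μ, ν) ≤ d(P) ≤ μ + ν` where `μ` is the number of minima of the upper
envelope and `ν` the number of maxima of the lower envelope. -/
theorem stmt3 (P : Finset (ℤ × ℤ)) (hP : IsPolyomino P) (hmono : ColumnConvex ↑P) :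
    max (Set.ncard {t : ℤ × ℤ × ℤ | UpperEnvMin ↑P t.1 t.2.1 t.2.2})
        (Set.ncard {t : ℤ × ℤ × ℤ | LowerEnvMax ↑P t.1 t.2.1 t.2.2})
      ≤ decompNumber P ∧
    decompNumber P ≤
      Set.ncard {t : ℤ × ℤ × ℤ | UpperEnvMin ↑P t.1 t.2.1 t.2.2} +
      Set.ncard {t : ℤ × ℤ × ℤ | LowerEnvMax ↑P t.1 t.2.1 t.2.2} := by
  classical
  have hmem : (cutSet2357 P).card ∈ {k | ∃ C : Finset ℤ, C.card = k ∧ Decomposes P C} :=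
    ⟨cutSet2357 P, rfl, cutSet_decomposes2357 P hP hmono⟩
  have hne : {k | ∃ C : Finset ℤ, C.card = k ∧ Decomposes P C}.Nonempty := ⟨_, hmem⟩
  constructor
  · obtain ⟨C, hCcard, hCdec⟩ := Nat.sInf_mem hne
    rw [decompNumber, ← hCcard]
    exact max_le (uMin_count2357 hmono hCdec) (lMax_count2357 hmono hCdec)
  · calc decompNumber P ≤ (cutSet2357 P).card := Nat.sInf_le hmem
      _ ≤ _ := cutSet_card2357 P
end Aux2357
end

section
/- Let P be an x-monotone polyomino with decomposition number d(P) ≥ 1. Then there exists c ∈ ℤ such that P≤c and P>c are both nonempty and d(P≤c) ≤ ⌊d(P)/2⌋ and d(P>c) ≤ ⌊d(P)/2⌋. -/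
lemma kth_element (s : Finset ℤ) (k : ℕ) (hk : k < s.card) :
    ∃ c ∈ s, (s.filter (· < c)).card = k := by
  set f := s.orderIsoOfFin rfl with hf
  refine ⟨f ⟨k, hk⟩, (f ⟨k, hk⟩).2, ?_⟩
  have himg : s.filter (· < (f ⟨k, hk⟩ : ℤ)) =
      (Finset.Iio (⟨k, hk⟩ : Fin s.card)).image (fun j => (f j : ℤ)) := by
    ext x
    simp only [Finset.mem_filter, Finset.mem_image, Finset.mem_Iio]
    constructor
    · rintro ⟨hx, hlt⟩
      refine ⟨f.symm ⟨x, hx⟩, ?_, by simp⟩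
      have h2 : f (f.symm ⟨x, hx⟩) < f ⟨k, hk⟩ := by
        rw [OrderIso.apply_symm_apply]
        exact hlt
      exact f.lt_iff_lt.mp h2
    · rintro ⟨j, hj, rfl⟩
      exact ⟨(f j).2, f.lt_iff_lt.mpr hj⟩
  rw [himg, Finset.card_image_of_injective _
    (fun a b h => f.injective (Subtype.ext h))]
  simp

lemma decomp_exists (P : Finset (ℤ × ℤ)) (hd : 1 ≤ decompNumber P) :
    ∃ C : Finset ℤ, C.card = decompNumber P ∧ Decomposes P C := by
  have hne : {k | ∃ C : Finset ℤ, C.card = k ∧ Decomposes P C}.Nonempty := by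
    by_contra h
    rw [Set.not_nonempty_iff_eq_empty] at h
    have : decompNumber P = 0 := by rw [decompNumber, h, Nat.sInf_empty]
    omega
  exact Nat.sInf_mem hne

/-- Any x-monotone polyomino with `d(P) ≥ 1` admits a vertical cut
position `c` (with both pieces nonempty) halving the decomposition number of
both pieces. -/
theorem stmt4 (P : Finset (ℤ × ℤ)) (hP : IsPolyomino P) (hmono : ColumnConvex ↑P)
    (hd : 1 ≤ decompNumber P) :
    ∃ c : ℤ, (PLe P c).Nonempty ∧ (PGt P c).Nonempty ∧
      decompNumber (PLe P c) ≤ decompNumber P / 2 ∧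
      decompNumber (PGt P c) ≤ decompNumber P / 2 := by
  classical
  obtain ⟨C, hCcard, hCdec⟩ := decomp_exists P hd
  set d := decompNumber P with hdval
  have hklt : (d - 1) / 2 < C.card := by omega
  obtain ⟨c, hcC, hcnt⟩ := kth_element C ((d - 1) / 2) hklt
  -- cardinalities of the two sides
  have hsplit : (C.filter (· < c)).card + (C.filter (fun x => c < x)).card + 1 = d := by
    have h1 : C = (C.filter (· < c)) ∪ (C.filter (fun x => c < x)) ∪ {c} := by
      ext x
      simp only [Finset.mem_union, Finset.mem_filter, Finset.mem_singleton]
      constructor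
      · intro hx
        rcases lt_trichotomy x c with h | h | h
        · exact Or.inl (Or.inl ⟨hx, h⟩)
        · exact Or.inr h
        · exact Or.inl (Or.inr ⟨hx, h⟩)
      · rintro ((⟨h, _⟩ | ⟨h, _⟩) | rfl) <;> [exact h; exact h; exact hcC]
    have hd1 : Disjoint (C.filter (· < c)) (C.filter (fun x => c < x)) := by
      rw [Finset.disjoint_left]
      intro x hx hx'
      have h1 := (Finset.mem_filter.mp hx).2
      have h2 := (Finset.mem_filter.mp hx').2
      omega
    have hd2 : Disjoint ((C.filter (· < c)) ∪ (C.filter (fun x => c < x))) ({c} : Finset ℤ) := by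
      simp only [Finset.disjoint_singleton_right, Finset.mem_union, Finset.mem_filter]
      rintro (⟨_, h⟩ | ⟨_, h⟩) <;> exact absurd h (lt_irrefl c)
    calc (C.filter (· < c)).card + (C.filter (fun x => c < x)).card + 1
        = ((C.filter (· < c)) ∪ (C.filter (fun x => c < x))).card + ({c} : Finset ℤ).card := by
          rw [Finset.card_union_of_disjoint hd1, Finset.card_singleton]
      _ = (((C.filter (· < c)) ∪ (C.filter (fun x => c < x))) ∪ {c}).card := by
          rw [Finset.card_union_of_disjoint hd2]
      _ = C.card := by rw [← h1]
      _ = d := hCcard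
  -- nonemptiness of the two pieces
  have hLne : (PLe P c).Nonempty := by
    by_contra hne
    rw [Finset.not_nonempty_iff_eq_empty] at hne
    have hall : ∀ q ∈ P, ¬ q.1 ≤ c := by
      intro q hq hle
      have : q ∈ PLe P c := Finset.mem_filter.mpr ⟨hq, hle⟩
      simp [hne] at this
    have hdec' : Decomposes P (C.erase c) := by
      intro p hp
      have heq : CutPart P (C.erase c) p = CutPart P C p := by
        ext q
        simp only [CutPart, Finset.mem_filter]
        constructor
        · rintro ⟨hq, h⟩
          refine ⟨hq, fun c' hc' => ?_⟩
          rcases eq_or_ne c' c with rfl | hne'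
          · exact iff_of_false (hall q hq) (hall p hp)
          · exact h c' (Finset.mem_erase.mpr ⟨hne', hc'⟩)
        · rintro ⟨hq, h⟩
          exact ⟨hq, fun c' hc' => h c' (Finset.mem_of_mem_erase hc')⟩
      rw [heq]
      exact hCdec p hp
    have : decompNumber P ≤ (C.erase c).card :=
      Nat.sInf_le ⟨C.erase c, rfl, hdec'⟩
    rw [Finset.card_erase_of_mem hcC, hCcard] at this
    omega
  have hGne : (PGt P c).Nonempty := by
    by_contra hne
    rw [Finset.not_nonempty_iff_eq_empty] at hne
    have hall : ∀ q ∈ P, q.1 ≤ c := by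
      intro q hq
      by_contra hle
      have : q ∈ PGt P c := Finset.mem_filter.mpr ⟨hq, by omega⟩
      simp [hne] at this
    have hdec' : Decomposes P (C.erase c) := by
      intro p hp
      have heq : CutPart P (C.erase c) p = CutPart P C p := by
        ext q
        simp only [CutPart, Finset.mem_filter]
        constructor
        · rintro ⟨hq, h⟩
          refine ⟨hq, fun c' hc' => ?_⟩
          rcases eq_or_ne c' c with rfl | hne'
          · exact iff_of_true (hall q hq) (hall p hp)
          · exact h c' (Finset.mem_erase.mpr ⟨hne', hc'⟩)
        · rintro ⟨hq, h⟩
          exact ⟨hq, fun c' hc' => h c' (Finset.mem_of_mem_erase hc')⟩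
      rw [heq]
      exact hCdec p hp
    have : decompNumber P ≤ (C.erase c).card :=
      Nat.sInf_le ⟨C.erase c, rfl, hdec'⟩
    rw [Finset.card_erase_of_mem hcC, hCcard] at this
    omega
  -- decomposition of the left piece
  have hdecL : Decomposes (PLe P c) (C.filter (· < c)) := by
    intro p hp
    obtain ⟨hpP, hpc⟩ := Finset.mem_filter.mp hp
    have heq : CutPart (PLe P c) (C.filter (· < c)) p = CutPart P C p := by
      ext q
      simp only [CutPart, PLe, Finset.mem_filter]
      constructor
      · rintro ⟨⟨hq, hqc⟩, h⟩
        refine ⟨hq, fun c' hc' => ?_⟩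
        rcases lt_or_ge c' c with hlt | hge
        · exact h c' ⟨hc', hlt⟩
        · exact iff_of_true (le_trans hqc hge) (le_trans hpc hge)
      · rintro ⟨hq, h⟩
        have hqc : q.1 ≤ c := (h c hcC).mpr hpc
        exact ⟨⟨hq, hqc⟩, fun c' hc' => h c' hc'.1⟩
    rw [heq]
    exact hCdec p hpP
  -- decomposition of the right piece
  have hdecG : Decomposes (PGt P c) (C.filter (fun x => c < x)) := by
    intro p hp
    obtain ⟨hpP, hpc⟩ := Finset.mem_filter.mp hp
    have heq : CutPart (PGt P c) (C.filter (fun x => c < x)) p = CutPart P C p := by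
      ext q
      simp only [CutPart, PGt, Finset.mem_filter]
      constructor
      · rintro ⟨⟨hq, hqc⟩, h⟩
        refine ⟨hq, fun c' hc' => ?_⟩
        rcases lt_or_ge c c' with hlt | hge
        · exact h c' ⟨hc', hlt⟩
        · exact iff_of_false (by omega) (by omega)
      · rintro ⟨hq, h⟩
        have hqc : c < q.1 := by
          have := (h c hcC)
          omega
        exact ⟨⟨hq, hqc⟩, fun c' hc' => h c' hc'.1⟩
    rw [heq]
    exact hCdec p hpP
  refine ⟨c, hLne, hGne, ?_, ?_⟩
  · have h1 : decompNumber (PLe P c) ≤ (C.filter (· < c)).card :=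
      Nat.sInf_le ⟨C.filter (· < c), rfl, hdecL⟩
    omega
  · have h1 : decompNumber (PGt P c) ≤ (C.filter (fun x => c < x)).card :=
      Nat.sInf_le ⟨C.filter (fun x => c < x), rfl, hdecG⟩
    omega
end

section
/- Define inductively, for k ∈ ℕ: an x-monotone polyomino P admits a vertical decomposition tree of depth k if P is orthogonally convex, or k ≥ 1 and there exists c ∈ ℤ with P≤c and P>c both nonempty such that both P≤c and P>c admit vertical decomposition trees of depth k−1. Then every x-monotone polyomino P admits a vertical decomposition tree of depth ⌈log₂(d(P)+1)⌉, where d(P) is the decomposition number of P. -/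
/-- `P` admits a vertical decomposition tree of depth `k`: `P` is orthogonally
convex, or `k ≥ 1` and some vertical cut (with both pieces nonempty) splits `P`
into pieces each admitting a vertical decomposition tree of depth `k - 1`. -/
def AdmitsTree : ℕ → Finset (ℤ × ℤ) → Prop
  | 0, P => OrthoConvex ↑P
  | k + 1, P => OrthoConvex ↑P ∨
      ∃ c : ℤ, (PLe P c).Nonempty ∧ (PGt P c).Nonempty ∧
        AdmitsTree k (PLe P c) ∧ AdmitsTree k (PGt P c)

lemma admitsTree_succ_iff (k : ℕ) (P : Finset (ℤ × ℤ)) :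
    AdmitsTree (k + 1) P ↔ OrthoConvex ↑P ∨
      ∃ c : ℤ, (PLe P c).Nonempty ∧ (PGt P c).Nonempty ∧
        AdmitsTree k (PLe P c) ∧ AdmitsTree k (PGt P c) := Iff.rfl

lemma convex_admitsTree (k : ℕ) (P : Finset (ℤ × ℤ)) (h : OrthoConvex ↑P) :
    AdmitsTree k P := by
  cases k with
  | zero => exact h
  | succ k => exact Or.inl h

lemma admitsTree_step : ∀ (k : ℕ) (P : Finset (ℤ × ℤ)),
    AdmitsTree k P → AdmitsTree (k + 1) P := by
  intro k
  induction k with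
  | zero => intro P h; exact Or.inl h
  | succ k ih =>
    intro P h
    rw [admitsTree_succ_iff] at h
    rcases h with h | ⟨c, h1, h2, h3, h4⟩
    · exact Or.inl h
    · exact Or.inr ⟨c, h1, h2, ih _ h3, ih _ h4⟩

lemma admitsTree_mono {k k' : ℕ} (h : k ≤ k') (P : Finset (ℤ × ℤ))
    (hk : AdmitsTree k P) : AdmitsTree k' P := by
  induction h with
  | refl => exact hk
  | step _ ih => exact admitsTree_step _ _ ih

lemma mem_cutPart_iff (P : Finset (ℤ × ℤ)) (C : Finset ℤ) (p q : ℤ × ℤ) :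
    q ∈ CutPart P C p ↔ q ∈ P ∧ ∀ c ∈ C, (q.1 ≤ c ↔ p.1 ≤ c) := by
  simp [CutPart]

/-- Existence of a cut position with exactly `n` smaller cut positions. -/
lemma exists_filter_lt_card : ∀ (n : ℕ) (C : Finset ℤ), n < C.card →
    ∃ c ∈ C, (C.filter (fun x => x < c)).card = n := by
  intro n
  induction n with
  | zero =>
    intro C hC
    have hne : C.Nonempty := Finset.card_pos.mp (by omega)
    refine ⟨C.min' hne, C.min'_mem hne, ?_⟩
    rw [Finset.card_eq_zero, Finset.filter_eq_empty_iff]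
    intro x hx
    exact not_lt.mpr (C.min'_le x hx)
  | succ n ih =>
    intro C hC
    have hne : C.Nonempty := Finset.card_pos.mp (by omega)
    set m := C.min' hne with hm
    have hmC : m ∈ C := C.min'_mem hne
    have h' : n < (C.erase m).card := by
      rw [Finset.card_erase_of_mem hmC]; omega
    obtain ⟨c, hc, hcard⟩ := ih (C.erase m) h'
    have hcC : c ∈ C := Finset.mem_of_mem_erase hc
    have hmc : m < c := by
      have h1 : m ≤ c := C.min'_le c hcC
      have h2 : c ≠ m := (Finset.mem_erase.mp hc).1
      omega
    refine ⟨c, hcC, ?_⟩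
    have heq : C.filter (fun x => x < c) =
        insert m ((C.erase m).filter (fun x => x < c)) := by
      ext x
      simp only [Finset.mem_filter, Finset.mem_insert, Finset.mem_erase]
      constructor
      · rintro ⟨hxC, hxc⟩
        by_cases hxm : x = m
        · exact Or.inl hxm
        · exact Or.inr ⟨⟨hxm, hxC⟩, hxc⟩
      · rintro (rfl | ⟨⟨_, hxC⟩, hxc⟩)
        · exact ⟨hmC, hmc⟩
        · exact ⟨hxC, hxc⟩
    rw [heq, Finset.card_insert_of_notMem, hcard]
    simp only [Finset.mem_filter, Finset.mem_erase]
    rintro ⟨⟨hmm, _⟩, _⟩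
    exact hmm rfl

lemma cutPart_left (P : Finset (ℤ × ℤ)) (C : Finset ℤ) (c : ℤ) (hcC : c ∈ C)
    (p : ℤ × ℤ) (hp : p ∈ P) (hpc : p.1 ≤ c) :
    CutPart (PLe P c) (C.filter (fun x => x < c)) p = CutPart P C p := by
  ext q
  simp only [mem_cutPart_iff, PLe, Finset.mem_filter]
  constructor
  · rintro ⟨⟨hq, hq1⟩, h⟩
    refine ⟨hq, fun c' hc' => ?_⟩
    by_cases hlt : c' < c
    · exact h c' ⟨hc', hlt⟩
    · constructor <;> intro _ <;> omega
  · rintro ⟨hq, h⟩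
    have hq1 : q.1 ≤ c := (h c hcC).mpr hpc
    exact ⟨⟨hq, hq1⟩, fun c' hc' => h c' hc'.1⟩

lemma cutPart_right (P : Finset (ℤ × ℤ)) (C : Finset ℤ) (c : ℤ) (hcC : c ∈ C)
    (p : ℤ × ℤ) (hp : p ∈ P) (hpc : c < p.1) :
    CutPart (PGt P c) (C.filter (fun x => c < x)) p = CutPart P C p := by
  ext q
  simp only [mem_cutPart_iff, PGt, Finset.mem_filter]
  constructor
  · rintro ⟨⟨hq, hq1⟩, h⟩
    refine ⟨hq, fun c' hc' => ?_⟩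
    by_cases hlt : c < c'
    · exact h c' ⟨hc', hlt⟩
    · constructor <;> intro _ <;> omega
  · rintro ⟨hq, h⟩
    have hq1 : c < q.1 := by
      have := h c hcC
      omega
    exact ⟨⟨hq, hq1⟩, fun c' hc' => h c' hc'.1⟩

lemma decomposes_erase (P : Finset (ℤ × ℤ)) (C : Finset ℤ) (c : ℤ)
    (hiff : ∀ p ∈ P, ∀ q ∈ P, (q.1 ≤ c ↔ p.1 ≤ c))
    (hdec : Decomposes P C) : Decomposes P (C.erase c) := by
  intro p hp
  have heq : CutPart P (C.erase c) p = CutPart P C p := by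
    ext q
    simp only [mem_cutPart_iff, Finset.mem_erase]
    constructor
    · rintro ⟨hq, h⟩
      refine ⟨hq, fun c' hc' => ?_⟩
      by_cases hc'c : c' = c
      · subst hc'c; exact hiff p hp q hq
      · exact h c' ⟨hc'c, hc'⟩
    · rintro ⟨hq, h⟩
      exact ⟨hq, fun c' hc' => h c' hc'.2⟩
  rw [heq]
  exact hdec p hp

/-- Main induction: a decomposition into at most `d` cuts yields a tree of
depth `⌈log₂(d+1)⌉`. -/
lemma main_lemma : ∀ (d : ℕ) (C : Finset ℤ) (P : Finset (ℤ × ℤ)),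
    C.card ≤ d → P.Nonempty → Decomposes P C →
    AdmitsTree (Nat.clog 2 (d + 1)) P := by
  intro d
  induction d using Nat.strong_induction_on with
  | _ d ih =>
  intro C P hcard hPne hdec
  by_cases hconv : OrthoConvex ↑P
  · exact convex_admitsTree _ _ hconv
  have hCne : C.Nonempty := by
    rcases Finset.eq_empty_or_nonempty C with h | h
    · exfalso
      apply hconv
      obtain ⟨p, hp⟩ := hPne
      have hpart := hdec p hp
      have heq : CutPart P C p = P := by
        subst h; simp [CutPart]
      rwa [heq] at hpart
    · exact h
  have hd1 : 1 ≤ d := le_trans (Finset.card_pos.mpr hCne) hcard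
  have hcpos : 1 ≤ C.card := Finset.card_pos.mpr hCne
  obtain ⟨c, hcC, hc1⟩ := exists_filter_lt_card ((C.card - 1) / 2) C (by omega)
  by_cases hdeg : (PLe P c).Nonempty ∧ (PGt P c).Nonempty
  · obtain ⟨hle, hgt⟩ := hdeg
    set C₁ := C.filter (fun x => x < c) with hC₁
    set C₂ := C.filter (fun x => c < x) with hC₂
    -- cardinality split
    have hsplit : C₁.card + (C.filter (fun x => ¬ x < c)).card = C.card :=
      Finset.card_filter_add_card_filter_not _
    have hins : C.filter (fun x => ¬ x < c) = insert c C₂ := by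
      ext x
      simp only [Finset.mem_filter, Finset.mem_insert, hC₂, not_lt]
      constructor
      · rintro ⟨hxC, hcx⟩
        rcases eq_or_lt_of_le hcx with h | h
        · exact Or.inl h.symm
        · exact Or.inr ⟨hxC, h⟩
      · rintro (rfl | ⟨hxC, hcx⟩)
        · exact ⟨hcC, le_refl _⟩
        · exact ⟨hxC, le_of_lt hcx⟩
    have hcnot : c ∉ C₂ := by simp [hC₂]
    have hcard2 : C₁.card + C₂.card + 1 = C.card := by
      rw [hins, Finset.card_insert_of_notMem hcnot] at hsplit
      omega
    set m := d - 1 - (d - 1) / 2 with hm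
    have hmd : m < d := by omega
    have hC1m : C₁.card ≤ m := by omega
    have hC2m : C₂.card ≤ m := by omega
    have hdecL : Decomposes (PLe P c) C₁ := by
      intro p hp
      have hp' : p ∈ P ∧ p.1 ≤ c := Finset.mem_filter.mp hp
      rw [hC₁, cutPart_left P C c hcC p hp'.1 hp'.2]
      exact hdec p hp'.1
    have hdecR : Decomposes (PGt P c) C₂ := by
      intro p hp
      have hp' : p ∈ P ∧ c < p.1 := Finset.mem_filter.mp hp
      rw [hC₂, cutPart_right P C c hcC p hp'.1 hp'.2]
      exact hdec p hp'.1
    have treeL := ih m hmd C₁ (PLe P c) hC1m hle hdecL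
    have treeR := ih m hmd C₂ (PGt P c) hC2m hgt hdecR
    have hK : Nat.clog 2 (d + 1) = Nat.clog 2 (m + 1) + 1 := by
      rw [Nat.clog_of_two_le (by norm_num) (by omega)]
      congr 2
      omega
    rw [hK, admitsTree_succ_iff]
    exact Or.inr ⟨c, hle, hgt, treeL, treeR⟩
  · -- degenerate: one side empty, erase the cut
    have hiff : ∀ p ∈ P, ∀ q ∈ P, (q.1 ≤ c ↔ p.1 ≤ c) := by
      rw [not_and_or] at hdeg
      rcases hdeg with h | h
      · have hall : ∀ q ∈ P, ¬ q.1 ≤ c := by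
          intro q hq hqc
          exact h ⟨q, Finset.mem_filter.mpr ⟨hq, hqc⟩⟩
        intro p hp q hq
        constructor <;> intro h' <;> [exact absurd h' (hall q hq);
          exact absurd h' (hall p hp)]
      · have hall : ∀ q ∈ P, q.1 ≤ c := by
          intro q hq
          by_contra hqc
          exact h ⟨q, Finset.mem_filter.mpr ⟨hq, by omega⟩⟩
        intro p hp q hq
        simp [hall q hq, hall p hp]
    have hdec' : Decomposes P (C.erase c) := decomposes_erase P C c hiff hdec
    have hcard' : (C.erase c).card ≤ d - 1 := by
      rw [Finset.card_erase_of_mem hcC]; omega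
    have := ih (d - 1) (by omega) (C.erase c) P hcard' hPne hdec'
    exact admitsTree_mono (Nat.clog_mono_right 2 (by omega)) P this

/-- Single-column decomposition: the set of all x-coordinates always works. -/
lemma decomposes_image_fst (P : Finset (ℤ × ℤ)) (hmono : ColumnConvex ↑P) :
    Decomposes P (P.image Prod.fst) := by
  intro p hp
  have key : ∀ q ∈ CutPart P (P.image Prod.fst) p, q.1 = p.1 := by
    intro q hq
    rw [mem_cutPart_iff] at hq
    obtain ⟨hqP, h⟩ := hq
    have h1 := h q.1 (Finset.mem_image_of_mem Prod.fst hqP)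
    have h2 := h p.1 (Finset.mem_image_of_mem Prod.fst hp)
    omega
  constructor
  · intro x y₁ y₂ y h1 h2 hle1 hle2
    simp only [Finset.mem_coe, mem_cutPart_iff] at h1 h2 ⊢
    refine ⟨hmono x y₁ y₂ y h1.1 h2.1 hle1 hle2, ?_⟩
    intro c hc
    exact h1.2 c hc
  · intro y x₁ x₂ x h1 h2 hle1 hle2
    simp only [Finset.mem_coe] at h1 h2 ⊢
    have e1 : x₁ = p.1 := key (x₁, y) h1
    have e2 : x₂ = p.1 := key (x₂, y) h2
    have : x = x₁ := by omega
    rwa [this]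

/-- Every x-monotone polyomino admits a vertical decomposition tree
of depth `⌈log₂(d(P) + 1)⌉`. -/
theorem stmt5 (P : Finset (ℤ × ℤ)) (hP : IsPolyomino P) (hmono : ColumnConvex ↑P) :
    AdmitsTree (Nat.clog 2 (decompNumber P + 1)) P := by
  have hSne : {k | ∃ C : Finset ℤ, C.card = k ∧ Decomposes P C}.Nonempty :=
    ⟨(P.image Prod.fst).card, P.image Prod.fst, rfl, decomposes_image_fst P hmono⟩
  obtain ⟨C, hCcard, hCdec⟩ := Nat.sInf_mem hSne
  exact main_lemma (decompNumber P) C P (le_of_eq hCcard) hP.1 hCdec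
end

section
/- Let P be an orthogonally convex polyomino and let c ∈ ℤ be such that both P≤c = {p ∈ P : p₁ ≤ c} and P>c = {p ∈ P : p₁ > c} are nonempty. Then (P≤c, P>c) is a valid vertical straight 2-cut of P and both pieces are orthogonally convex polyominoes. Consequently, under the inductive definition that a polyomino Q decomposes into single tiles if |Q| = 1 or some valid vertical or horizontal straight 2-cut splits Q into two polyominoes that decompose into single tiles, every orthogonally convex polyomino decomposes into single tiles. -/
/-- `P` decomposes into single tiles: it is a single tile, or some valid
vertical or horizontal straight 2-cut splits it into two polyominoes that
decompose into single tiles. -/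
inductive DecToSingles : Finset (ℤ × ℤ) → Prop
  | single (P : Finset (ℤ × ℤ)) : P.card = 1 → DecToSingles P
  | vcut (P P₁ P₂ : Finset (ℤ × ℤ)) (c : ℤ) : ValidVCut P P₁ P₂ c →
      DecToSingles P₁ → DecToSingles P₂ → DecToSingles P
  | hcut (P P₁ P₂ : Finset (ℤ × ℤ)) (c : ℤ) : ValidHCut P P₁ P₂ c →
      DecToSingles P₁ → DecToSingles P₂ → DecToSingles P


section Helpers
lemma adj_natAbs {p q : ℤ × ℤ} : Adj p q ↔ (p.1 - q.1).natAbs + (p.2 - q.2).natAbs = 1 := by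
  unfold Adj; rw [Int.abs_eq_natAbs, Int.abs_eq_natAbs]; omega

lemma crossing {α : Type*} {R : α → α → Prop} {A : Set α} {p q : α}
    (h : Relation.ReflTransGen R p q) : p ∈ A → q ∉ A → ∃ a b, R a b ∧ a ∈ A ∧ b ∉ A := by
  induction h with
  | refl => exact fun hp hq => absurd hp hq
  | @tail b c hab hbc ih =>
    intro hp hq
    by_cases hb : b ∈ A
    · exact ⟨b, c, hbc, hb, hq⟩
    · exact ih hp hb

section Step
variable {S : Set (ℤ × ℤ)} (hconn : GridConnected S) (hcol : ColumnConvex S) (hrow : RowConvex S)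
  {p q : ℤ × ℤ} (hp : p ∈ S) (hq : q ∈ S)

include hconn hcol hrow hp hq in
lemma stepUR (hx : p.1 < q.1) (hy : p.2 < q.2) :
    (p.1 + 1, p.2) ∈ S ∨ (p.1, p.2 + 1) ∈ S := by
  by_contra h
  push_neg at h
  obtain ⟨a, b, ⟨ha, hb, hab⟩, haA, hbA⟩ :=
    crossing (A := {r : ℤ × ℤ | r.1 ≤ p.1 ∨ r.2 ≤ p.2}) (hconn p hp q hq)
      (Or.inl le_rfl) (by simp <;> omega)
  simp only [Set.mem_setOf_eq, not_or, not_le] at haA hbA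
  rw [adj_natAbs] at hab
  have ha' : (a.1, a.2) ∈ S := by simpa using ha
  rcases haA with h1 | h1
  · -- a.1 ≤ p.1, so a.1 = p.1, b = (p.1+1, a.2), a.2 = b.2 > p.2
    have e1 : a.1 = p.1 := by omega
    have e2 : a.2 > p.2 := by omega
    have hp' : (p.1, p.2) ∈ S := by simpa using hp
    exact h.2 (hcol p.1 p.2 a.2 (p.2+1) hp' (e1 ▸ ha') (by omega) (by omega))
  · have e1 : a.2 = p.2 := by omega
    have e2 : a.1 > p.1 := by omega
    have hp' : (p.1, p.2) ∈ S := by simpa using hp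
    exact h.1 (hrow p.2 p.1 a.1 (p.1+1) hp' (e1 ▸ ha') (by omega) (by omega))

include hconn hcol hrow hp hq in
lemma stepDR (hx : p.1 < q.1) (hy : q.2 < p.2) :
    (p.1 + 1, p.2) ∈ S ∨ (p.1, p.2 - 1) ∈ S := by
  by_contra h
  push_neg at h
  obtain ⟨a, b, ⟨ha, hb, hab⟩, haA, hbA⟩ :=
    crossing (A := {r : ℤ × ℤ | r.1 ≤ p.1 ∨ p.2 ≤ r.2}) (hconn p hp q hq)
      (Or.inl le_rfl) (by simp <;> omega)
  simp only [Set.mem_setOf_eq, not_or, not_le] at haA hbA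
  rw [adj_natAbs] at hab
  have ha' : (a.1, a.2) ∈ S := by simpa using ha
  have hp' : (p.1, p.2) ∈ S := by simpa using hp
  rcases haA with h1 | h1
  · have e1 : a.1 = p.1 := by omega
    have e2 : a.2 < p.2 := by omega
    exact h.2 (hcol p.1 a.2 p.2 (p.2-1) (e1 ▸ ha') hp' (by omega) (by omega))
  · have e1 : a.2 = p.2 := by omega
    have e2 : a.1 > p.1 := by omega
    exact h.1 (hrow p.2 p.1 a.1 (p.1+1) hp' (e1 ▸ ha') (by omega) (by omega))

include hconn hcol hrow hp hq in
lemma stepUL (hx : q.1 < p.1) (hy : p.2 < q.2) :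
    (p.1 - 1, p.2) ∈ S ∨ (p.1, p.2 + 1) ∈ S := by
  by_contra h
  push_neg at h
  obtain ⟨a, b, ⟨ha, hb, hab⟩, haA, hbA⟩ :=
    crossing (A := {r : ℤ × ℤ | p.1 ≤ r.1 ∨ r.2 ≤ p.2}) (hconn p hp q hq)
      (Or.inl le_rfl) (by simp <;> omega)
  simp only [Set.mem_setOf_eq, not_or, not_le] at haA hbA
  rw [adj_natAbs] at hab
  have ha' : (a.1, a.2) ∈ S := by simpa using ha
  have hp' : (p.1, p.2) ∈ S := by simpa using hp
  rcases haA with h1 | h1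
  · have e1 : a.1 = p.1 := by omega
    have e2 : a.2 > p.2 := by omega
    exact h.2 (hcol p.1 p.2 a.2 (p.2+1) hp' (e1 ▸ ha') (by omega) (by omega))
  · have e1 : a.2 = p.2 := by omega
    have e2 : a.1 < p.1 := by omega
    exact h.1 (hrow p.2 a.1 p.1 (p.1-1) (e1 ▸ ha') hp' (by omega) (by omega))

include hconn hcol hrow hp hq in
lemma stepDL (hx : q.1 < p.1) (hy : q.2 < p.2) :
    (p.1 - 1, p.2) ∈ S ∨ (p.1, p.2 - 1) ∈ S := by
  by_contra h
  push_neg at h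
  obtain ⟨a, b, ⟨ha, hb, hab⟩, haA, hbA⟩ :=
    crossing (A := {r : ℤ × ℤ | p.1 ≤ r.1 ∨ p.2 ≤ r.2}) (hconn p hp q hq)
      (Or.inl le_rfl) (by simp <;> omega)
  simp only [Set.mem_setOf_eq, not_or, not_le] at haA hbA
  rw [adj_natAbs] at hab
  have ha' : (a.1, a.2) ∈ S := by simpa using ha
  have hp' : (p.1, p.2) ∈ S := by simpa using hp
  rcases haA with h1 | h1
  · have e1 : a.1 = p.1 := by omega
    have e2 : a.2 < p.2 := by omega
    exact h.2 (hcol p.1 a.2 p.2 (p.2-1) (e1 ▸ ha') hp' (by omega) (by omega))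
  · have e1 : a.2 = p.2 := by omega
    have e2 : a.1 < p.1 := by omega
    exact h.1 (hrow p.2 a.1 p.1 (p.1-1) (e1 ▸ ha') hp' (by omega) (by omega))
end Step

def InBox (p q r : ℤ × ℤ) : Prop :=
  min p.1 q.1 ≤ r.1 ∧ r.1 ≤ max p.1 q.1 ∧ min p.2 q.2 ≤ r.2 ∧ r.2 ≤ max p.2 q.2

def gdist (p q : ℤ × ℤ) : ℕ := (p.1 - q.1).natAbs + (p.2 - q.2).natAbs

section Conn
variable {S : Set (ℤ × ℤ)} (hconn : GridConnected S) (hcol : ColumnConvex S) (hrow : RowConvex S)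

include hconn hcol hrow in
lemma neighbor {p q : ℤ × ℤ} (hp : p ∈ S) (hq : q ∈ S) (hne : p ≠ q) :
    ∃ r ∈ S, Adj p r ∧ InBox p q r ∧ gdist r q < gdist p q := by
  have hp' : (p.1, p.2) ∈ S := by simpa using hp
  have hq' : (q.1, q.2) ∈ S := by simpa using hq
  have hne' : p.1 ≠ q.1 ∨ p.2 ≠ q.2 := by
    by_contra hc; push_neg at hc; exact hne (Prod.ext hc.1 hc.2)
  rcases lt_trichotomy p.1 q.1 with hx | hx | hx
  · rcases lt_trichotomy p.2 q.2 with hy | hy | hy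
    · rcases stepUR hconn hcol hrow hp hq hx hy with h | h
      · exact ⟨(p.1+1, p.2), h, adj_natAbs.mpr (by simp <;> omega),
          ⟨by simp <;> omega, by simp <;> omega, by simp <;> omega, by simp <;> omega⟩,
          by unfold gdist; simp <;> omega⟩
      · exact ⟨(p.1, p.2+1), h, adj_natAbs.mpr (by simp <;> omega),
          ⟨by simp <;> omega, by simp <;> omega, by simp <;> omega, by simp <;> omega⟩,
          by unfold gdist; simp <;> omega⟩
    · exact ⟨(p.1+1, p.2), hrow p.2 p.1 q.1 (p.1+1) hp' (hy ▸ hq') (by omega) (by omega),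
        adj_natAbs.mpr (by simp <;> omega),
        ⟨by simp <;> omega, by simp <;> omega, by simp <;> omega, by simp <;> omega⟩,
        by unfold gdist; simp <;> omega⟩
    · rcases stepDR hconn hcol hrow hp hq hx hy with h | h
      · exact ⟨(p.1+1, p.2), h, adj_natAbs.mpr (by simp <;> omega),
          ⟨by simp <;> omega, by simp <;> omega, by simp <;> omega, by simp <;> omega⟩,
          by unfold gdist; simp <;> omega⟩
      · exact ⟨(p.1, p.2-1), h, adj_natAbs.mpr (by simp <;> omega),
          ⟨by simp <;> omega, by simp <;> omega, by simp <;> omega, by simp <;> omega⟩,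
          by unfold gdist; simp <;> omega⟩
  · have hy : p.2 ≠ q.2 := by omega
    rcases lt_or_gt_of_ne hy with hy | hy
    · exact ⟨(p.1, p.2+1), hcol p.1 p.2 q.2 (p.2+1) hp' (hx ▸ hq') (by omega) (by omega),
        adj_natAbs.mpr (by simp <;> omega),
        ⟨by simp <;> omega, by simp <;> omega, by simp <;> omega, by simp <;> omega⟩,
        by unfold gdist; simp <;> omega⟩
    · exact ⟨(p.1, p.2-1), hcol p.1 q.2 p.2 (p.2-1) (hx ▸ hq') hp' (by omega) (by omega),
        adj_natAbs.mpr (by simp <;> omega),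
        ⟨by simp <;> omega, by simp <;> omega, by simp <;> omega, by simp <;> omega⟩,
        by unfold gdist; simp <;> omega⟩
  · rcases lt_trichotomy p.2 q.2 with hy | hy | hy
    · rcases stepUL hconn hcol hrow hp hq hx hy with h | h
      · exact ⟨(p.1-1, p.2), h, adj_natAbs.mpr (by simp <;> omega),
          ⟨by simp <;> omega, by simp <;> omega, by simp <;> omega, by simp <;> omega⟩,
          by unfold gdist; simp <;> omega⟩
      · exact ⟨(p.1, p.2+1), h, adj_natAbs.mpr (by simp <;> omega),
          ⟨by simp <;> omega, by simp <;> omega, by simp <;> omega, by simp <;> omega⟩,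
          by unfold gdist; simp <;> omega⟩
    · exact ⟨(p.1-1, p.2), hrow p.2 q.1 p.1 (p.1-1) (hy ▸ hq') hp' (by omega) (by omega),
        adj_natAbs.mpr (by simp <;> omega),
        ⟨by simp <;> omega, by simp <;> omega, by simp <;> omega, by simp <;> omega⟩,
        by unfold gdist; simp <;> omega⟩
    · rcases stepDL hconn hcol hrow hp hq hx hy with h | h
      · exact ⟨(p.1-1, p.2), h, adj_natAbs.mpr (by simp <;> omega),
          ⟨by simp <;> omega, by simp <;> omega, by simp <;> omega, by simp <;> omega⟩,
          by unfold gdist; simp <;> omega⟩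
      · exact ⟨(p.1, p.2-1), h, adj_natAbs.mpr (by simp <;> omega),
          ⟨by simp <;> omega, by simp <;> omega, by simp <;> omega, by simp <;> omega⟩,
          by unfold gdist; simp <;> omega⟩

include hconn hcol hrow in
lemma boxpath : ∀ n : ℕ, ∀ p q : ℤ × ℤ, p ∈ S → q ∈ S → gdist p q ≤ n →
    Relation.ReflTransGen
      (fun a b => (a ∈ S ∧ InBox p q a) ∧ (b ∈ S ∧ InBox p q b) ∧ Adj a b) p q := by
  intro n
  induction n with
  | zero =>
    intro p q hp hq hd
    have : p = q := by
      unfold gdist at hd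
      exact Prod.ext (by omega) (by omega)
    exact this ▸ Relation.ReflTransGen.refl
  | succ n ih =>
    intro p q hp hq hd
    by_cases hpq : p = q
    · exact hpq ▸ Relation.ReflTransGen.refl
    obtain ⟨r, hr, hadj, hbox, hlt⟩ := neighbor hconn hcol hrow hp hq hpq
    have hpath := ih r q hr hq (by omega)
    refine Relation.ReflTransGen.head
      ⟨⟨hp, by unfold InBox; omega⟩, ⟨hr, hbox⟩, hadj⟩ (Relation.ReflTransGen.mono ?_ _ _ hpath)
    rintro a b ⟨⟨h1, h4⟩, ⟨h2, h5⟩, h3⟩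
    unfold InBox at hbox h4 h5 ⊢
    exact ⟨⟨h1, by omega, by omega, by omega, by omega⟩,
      ⟨h2, by omega, by omega, by omega, by omega⟩, h3⟩

include hconn hcol hrow in
lemma conn_of_box {T : Set (ℤ × ℤ)} (hTS : T ⊆ S)
    (hbox : ∀ p ∈ T, ∀ q ∈ T, ∀ r ∈ S, InBox p q r → r ∈ T) : GridConnected T := by
  intro p hp q hq
  refine Relation.ReflTransGen.mono ?_ _ _ (boxpath hconn hcol hrow (gdist p q) p q (hTS hp) (hTS hq) le_rfl)
  rintro a b ⟨⟨h1, h4⟩, ⟨h2, h5⟩, h3⟩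
  exact ⟨hbox p hp q hq a h1 h4, hbox p hp q hq b h2 h5, h3⟩
end Conn

-- main vertical lemma
lemma vcut_main (P : Finset (ℤ × ℤ)) (c : ℤ)
    (hP : IsPolyomino P) (hconv : OrthoConvex ↑P)
    (h₁ : (PLe P c).Nonempty) (h₂ : (PGt P c).Nonempty) :
    ValidVCut P (PLe P c) (PGt P c) c ∧
      (IsPolyomino (PLe P c) ∧ OrthoConvex ↑(PLe P c)) ∧
      (IsPolyomino (PGt P c) ∧ OrthoConvex ↑(PGt P c)) := by
  obtain ⟨hne, hconn⟩ := hP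
  obtain ⟨hcol, hrow⟩ := hconv
  have mLe : ∀ r : ℤ × ℤ, r ∈ PLe P c ↔ r ∈ P ∧ r.1 ≤ c := by
    intro r; simp [PLe, Finset.mem_filter]
  have mGt : ∀ r : ℤ × ℤ, r ∈ PGt P c ↔ r ∈ P ∧ c < r.1 := by
    intro r; simp [PGt, Finset.mem_filter]
  have cLe : GridConnected ↑(PLe P c) := by
    apply conn_of_box hconn hcol hrow
    · intro r hr; rw [Finset.mem_coe, mLe] at hr; exact hr.1
    · intro p hp q hq r hr hbox
      rw [Finset.mem_coe, mLe] at hp hq ⊢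
      unfold InBox at hbox
      exact ⟨hr, by omega⟩
  have cGt : GridConnected ↑(PGt P c) := by
    apply conn_of_box hconn hcol hrow
    · intro r hr; rw [Finset.mem_coe, mGt] at hr; exact hr.1
    · intro p hp q hq r hr hbox
      rw [Finset.mem_coe, mGt] at hp hq ⊢
      unfold InBox at hbox
      exact ⟨hr, by omega⟩
  refine ⟨⟨⟨?_, ?_, h₁, h₂, cLe, cGt, ?_⟩, ?_⟩, ⟨⟨h₁, cLe⟩, ?_, ?_⟩, ⟨h₂, cGt⟩, ?_, ?_⟩
  · ext r; rw [Finset.mem_union, mLe, mGt]; constructor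
    · rintro (h | h) <;> exact h.1
    · intro h; by_cases hc : r.1 ≤ c
      · exact Or.inl ⟨h, hc⟩
      · exact Or.inr ⟨h, by omega⟩
  · rw [Finset.disjoint_left]; intro r h1 h2
    rw [mLe] at h1; rw [mGt] at h2; omega
  · intro p hp q hq hadj
    rw [mLe] at hp; rw [mGt] at hq
    rw [adj_natAbs] at hadj
    refine ⟨by omega, by omega, by omega⟩
  · intro k hk p hp hmem
    rw [mGt] at hp; rw [mLe] at hmem
    simp at hmem; omega
  · intro x y₁ y₂ y hy₁ hy₂ l1 l2
    rw [Finset.mem_coe, mLe] at hy₁ hy₂ ⊢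
    exact ⟨hcol x y₁ y₂ y (Finset.mem_coe.mpr hy₁.1) (Finset.mem_coe.mpr hy₂.1) l1 l2, hy₁.2⟩
  · intro y x₁ x₂ x hx₁ hx₂ l1 l2
    rw [Finset.mem_coe, mLe] at hx₁ hx₂ ⊢
    exact ⟨hrow y x₁ x₂ x (Finset.mem_coe.mpr hx₁.1) (Finset.mem_coe.mpr hx₂.1) l1 l2,
      by simp at hx₂ ⊢; omega⟩
  · intro x y₁ y₂ y hy₁ hy₂ l1 l2
    rw [Finset.mem_coe, mGt] at hy₁ hy₂ ⊢
    exact ⟨hcol x y₁ y₂ y (Finset.mem_coe.mpr hy₁.1) (Finset.mem_coe.mpr hy₂.1) l1 l2, hy₁.2⟩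
  · intro y x₁ x₂ x hx₁ hx₂ l1 l2
    rw [Finset.mem_coe, mGt] at hx₁ hx₂ ⊢
    exact ⟨hrow y x₁ x₂ x (Finset.mem_coe.mpr hx₁.1) (Finset.mem_coe.mpr hx₂.1) l1 l2,
      by simp at hx₁ ⊢; omega⟩

def PLeY (P : Finset (ℤ × ℤ)) (c : ℤ) : Finset (ℤ × ℤ) := P.filter (fun p => p.2 ≤ c)
def PGtY (P : Finset (ℤ × ℤ)) (c : ℤ) : Finset (ℤ × ℤ) := P.filter (fun p => c < p.2)

lemma hcut_main (P : Finset (ℤ × ℤ)) (c : ℤ)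
    (hP : IsPolyomino P) (hconv : OrthoConvex ↑P)
    (h₁ : (PLeY P c).Nonempty) (h₂ : (PGtY P c).Nonempty) :
    ValidHCut P (PLeY P c) (PGtY P c) c ∧
      (IsPolyomino (PLeY P c) ∧ OrthoConvex ↑(PLeY P c)) ∧
      (IsPolyomino (PGtY P c) ∧ OrthoConvex ↑(PGtY P c)) := by
  obtain ⟨hne, hconn⟩ := hP
  obtain ⟨hcol, hrow⟩ := hconv
  have mLe : ∀ r : ℤ × ℤ, r ∈ PLeY P c ↔ r ∈ P ∧ r.2 ≤ c := by
    intro r; simp [PLeY, Finset.mem_filter]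
  have mGt : ∀ r : ℤ × ℤ, r ∈ PGtY P c ↔ r ∈ P ∧ c < r.2 := by
    intro r; simp [PGtY, Finset.mem_filter]
  have cLe : GridConnected ↑(PLeY P c) := by
    apply conn_of_box hconn hcol hrow
    · intro r hr; rw [Finset.mem_coe, mLe] at hr; exact hr.1
    · intro p hp q hq r hr hbox
      rw [Finset.mem_coe, mLe] at hp hq ⊢
      unfold InBox at hbox
      exact ⟨hr, by omega⟩
  have cGt : GridConnected ↑(PGtY P c) := by
    apply conn_of_box hconn hcol hrow
    · intro r hr; rw [Finset.mem_coe, mGt] at hr; exact hr.1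
    · intro p hp q hq r hr hbox
      rw [Finset.mem_coe, mGt] at hp hq ⊢
      unfold InBox at hbox
      exact ⟨hr, by omega⟩
  refine ⟨⟨⟨?_, ?_, h₁, h₂, cLe, cGt, ?_⟩, ?_⟩, ⟨⟨h₁, cLe⟩, ?_, ?_⟩, ⟨h₂, cGt⟩, ?_, ?_⟩
  · ext r; rw [Finset.mem_union, mLe, mGt]; constructor
    · rintro (h | h) <;> exact h.1
    · intro h; by_cases hc : r.2 ≤ c
      · exact Or.inl ⟨h, hc⟩
      · exact Or.inr ⟨h, by omega⟩
  · rw [Finset.disjoint_left]; intro r h1 h2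
    rw [mLe] at h1; rw [mGt] at h2; omega
  · intro p hp q hq hadj
    rw [mLe] at hp; rw [mGt] at hq
    rw [adj_natAbs] at hadj
    refine ⟨by omega, by omega, by omega⟩
  · intro k hk p hp hmem
    rw [mGt] at hp; rw [mLe] at hmem
    simp at hmem; omega
  · intro x y₁ y₂ y hy₁ hy₂ l1 l2
    rw [Finset.mem_coe, mLe] at hy₁ hy₂ ⊢
    exact ⟨hcol x y₁ y₂ y (Finset.mem_coe.mpr hy₁.1) (Finset.mem_coe.mpr hy₂.1) l1 l2,
      by simp at hy₂ ⊢; omega⟩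
  · intro y x₁ x₂ x hx₁ hx₂ l1 l2
    rw [Finset.mem_coe, mLe] at hx₁ hx₂ ⊢
    exact ⟨hrow y x₁ x₂ x (Finset.mem_coe.mpr hx₁.1) (Finset.mem_coe.mpr hx₂.1) l1 l2,
      by simp at hx₂ ⊢; omega⟩
  · intro x y₁ y₂ y hy₁ hy₂ l1 l2
    rw [Finset.mem_coe, mGt] at hy₁ hy₂ ⊢
    exact ⟨hcol x y₁ y₂ y (Finset.mem_coe.mpr hy₁.1) (Finset.mem_coe.mpr hy₂.1) l1 l2,
      by simp at hy₁ ⊢; omega⟩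
  · intro y x₁ x₂ x hx₁ hx₂ l1 l2
    rw [Finset.mem_coe, mGt] at hx₁ hx₂ ⊢
    exact ⟨hrow y x₁ x₂ x (Finset.mem_coe.mpr hx₁.1) (Finset.mem_coe.mpr hx₂.1) l1 l2,
      by simp at hx₁ ⊢; omega⟩

lemma decomp_aux : ∀ n : ℕ, ∀ Q : Finset (ℤ × ℤ), Q.card ≤ n →
    IsPolyomino Q → OrthoConvex ↑Q → DecToSingles Q := by
  intro n
  induction n with
  | zero =>
    intro Q hc hQ _
    exact absurd (Finset.card_pos.mpr hQ.1) (by omega)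
  | succ n ih =>
    intro Q hc hQ hconv
    by_cases h1 : Q.card = 1
    · exact DecToSingles.single Q h1
    · have h2 : 2 ≤ Q.card := by have := Finset.card_pos.mpr hQ.1; omega
      obtain ⟨p, hp, q, hq, hpq⟩ := Finset.one_lt_card.mp h2
      by_cases hx : p.1 = q.1
      · -- all in one column? no: p,q have different y; cut horizontally at min
        have hy : p.2 ≠ q.2 := by
          intro h; exact hpq (Prod.ext hx h)
        obtain ⟨a, ha, b, hb, hab⟩ : ∃ a ∈ Q, ∃ b ∈ Q, a.2 < b.2 := by
          rcases lt_or_gt_of_ne hy with h | h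
          · exact ⟨p, hp, q, hq, h⟩
          · exact ⟨q, hq, p, hp, h⟩
        have hne1 : (PLeY Q a.2).Nonempty := ⟨a, by simp [PLeY, Finset.mem_filter, ha]⟩
        have hne2 : (PGtY Q a.2).Nonempty := ⟨b, by simp [PGtY, Finset.mem_filter, hb, hab]⟩
        obtain ⟨hvc, ⟨hp1, hc1⟩, hp2, hc2⟩ := hcut_main Q a.2 hQ hconv hne1 hne2
        have hsub1 : PLeY Q a.2 ⊆ Q := Finset.filter_subset _ _
        have hsub2 : PGtY Q a.2 ⊆ Q := Finset.filter_subset _ _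
        have hcard1 : (PLeY Q a.2).card < Q.card := by
          refine Finset.card_lt_card ⟨hsub1, fun hss => ?_⟩
          obtain ⟨r, hr⟩ := hne2
          have := hss (hsub2 hr)
          simp [PLeY, PGtY, Finset.mem_filter] at this hr
          omega
        have hcard2 : (PGtY Q a.2).card < Q.card := by
          refine Finset.card_lt_card ⟨hsub2, fun hss => ?_⟩
          obtain ⟨r, hr⟩ := hne1
          have := hss (hsub1 hr)
          simp [PLeY, PGtY, Finset.mem_filter] at this hr
          omega
        exact DecToSingles.hcut Q _ _ a.2 hvc
          (ih _ (by omega) hp1 hc1) (ih _ (by omega) hp2 hc2)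
      · obtain ⟨a, ha, b, hb, hab⟩ : ∃ a ∈ Q, ∃ b ∈ Q, a.1 < b.1 := by
          rcases lt_or_gt_of_ne hx with h | h
          · exact ⟨p, hp, q, hq, h⟩
          · exact ⟨q, hq, p, hp, h⟩
        have hne1 : (PLe Q a.1).Nonempty := ⟨a, by simp [PLe, Finset.mem_filter, ha]⟩
        have hne2 : (PGt Q a.1).Nonempty := ⟨b, by simp [PGt, Finset.mem_filter, hb, hab]⟩
        obtain ⟨hvc, ⟨hp1, hc1⟩, hp2, hc2⟩ := vcut_main Q a.1 hQ hconv hne1 hne2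
        have hsub1 : PLe Q a.1 ⊆ Q := Finset.filter_subset _ _
        have hsub2 : PGt Q a.1 ⊆ Q := Finset.filter_subset _ _
        have hcard1 : (PLe Q a.1).card < Q.card := by
          refine Finset.card_lt_card ⟨hsub1, fun hss => ?_⟩
          obtain ⟨r, hr⟩ := hne2
          have := hss (hsub2 hr)
          simp [PLe, PGt, Finset.mem_filter] at this hr
          omega
        have hcard2 : (PGt Q a.1).card < Q.card := by
          refine Finset.card_lt_card ⟨hsub2, fun hss => ?_⟩
          obtain ⟨r, hr⟩ := hne1
          have := hss (hsub1 hr)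
          simp [PLe, PGt, Finset.mem_filter] at this hr
          omega
        exact DecToSingles.vcut Q _ _ a.1 hvc
          (ih _ (by omega) hp1 hc1) (ih _ (by omega) hp2 hc2)

end Helpers

/-- Cutting an orthogonally convex polyomino vertically at `c`
(both pieces nonempty) gives a valid vertical straight 2-cut into two
orthogonally convex polyominoes; consequently every orthogonally convex
polyomino decomposes into single tiles. -/
theorem stmt6 (P : Finset (ℤ × ℤ)) (c : ℤ)
    (hP : IsPolyomino P) (hconv : OrthoConvex ↑P)
    (h₁ : (PLe P c).Nonempty) (h₂ : (PGt P c).Nonempty) :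
    (ValidVCut P (PLe P c) (PGt P c) c ∧
      (IsPolyomino (PLe P c) ∧ OrthoConvex ↑(PLe P c)) ∧
      (IsPolyomino (PGt P c) ∧ OrthoConvex ↑(PGt P c))) ∧
    ∀ Q : Finset (ℤ × ℤ), IsPolyomino Q → OrthoConvex ↑Q → DecToSingles Q := by
  refine ⟨vcut_main P c hP hconv h₁ h₂, ?_⟩
  intro Q hQ hc
  exact decomp_aux Q.card Q le_rfl hQ hc
end
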